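/- arXiv:1911.11461 — 10 statements merged into one kernel-verified Lean document; each statement's English description precedes it below -/
import Mathlib

section
/- If X is a topological space, W ⊆ X, and 𝒰 is a collection of open subsets of X such that for every subset C of W with |C| ≤ t(X) (the tightness of X) there exists U ∈ 𝒰 with closure(C) ⊆ U, then 𝒰 covers the closure of W. In particular, if X is Lindelöf, then W can be covered by countably many members of 𝒰. -/
open Cardinal Set Topology

universe u

/-- A free sequence of length `o` in the topology `t`: a transfinite sequence indexed by
the ordinals below `o` such that every initial segment's closure is disjoint from the
closure of the corresponding final segment. -/
def IsFreeSeqOn {X : Type u} (t : TopologicalSpace X) (o : Ordinal.{u})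
    (x : {α : Ordinal.{u} // α < o} → X) : Prop :=
  ∀ i : {α : Ordinal.{u} // α < o},
    @closure X t (x '' {j | j < i}) ∩ @closure X t (x '' {j | i ≤ j}) = ∅

/-- The tightness of a topology: the least infinite cardinal `κ` such that whenever a
point is in the closure of a set `A`, it is in the closure of a subset of `A` of
cardinality at most `κ`. -/
noncomputable def tightnessOf {X : Type u} (t : TopologicalSpace X) : Cardinal.{u} :=
  sInf {κ : Cardinal.{u} | ℵ₀ ≤ κ ∧ ∀ (A : Set X) (p : X), p ∈ @closure X t A →
    ∃ B ⊆ A, #↥B ≤ κ ∧ p ∈ @closure X t B}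

/-- The Lindelöf number: the least infinite cardinal `κ` such that every open cover has
a subcover of cardinality at most `κ`. -/
noncomputable def lindelofNumberOf {X : Type u} (t : TopologicalSpace X) : Cardinal.{u} :=
  sInf {κ : Cardinal.{u} | ℵ₀ ≤ κ ∧ ∀ 𝒰 : Set (Set X), (∀ U ∈ 𝒰, @IsOpen X t U) →
    ⋃₀ 𝒰 = Set.univ → ∃ 𝒱 ⊆ 𝒰, #↥𝒱 ≤ κ ∧ ⋃₀ 𝒱 = Set.univ}

/-- `F(X)`: the supremum of the cardinalities (lengths) of free sequences, at least ℵ₀. -/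
noncomputable def freeNumberOf {X : Type u} (t : TopologicalSpace X) : Cardinal.{u} :=
  ℵ₀ ⊔ sSup {c : Cardinal.{u} |
    ∃ x : {α : Ordinal.{u} // α < c.ord} → X, IsFreeSeqOn t c.ord x}

/-- The G_δ-modification: the topology generated by the G_δ-subsets. -/
def gDelta {X : Type u} (t : TopologicalSpace X) : TopologicalSpace X :=
  TopologicalSpace.generateFrom {s : Set X | @IsGδ X t s}

/-- `Cl_κ`-Lindelöf: every open `Cl_κ`-cover of any subset `W` contains a countable
subfamily covering `W`. -/
def ClLindelofOf {X : Type u} (t : TopologicalSpace X) (κ : Cardinal.{u}) : Prop :=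
  ∀ (W : Set X) (𝒰 : Set (Set X)), (∀ U ∈ 𝒰, @IsOpen X t U) →
    (∀ C ⊆ W, #↥C ≤ κ → ∃ U ∈ 𝒰, @closure X t C ⊆ U) →
    ∃ 𝒱 ⊆ 𝒰, 𝒱.Countable ∧ W ⊆ ⋃₀ 𝒱

/-- an open `Cl_{t(X)}`-cover of `W` covers `closure W`; in particular, if
`X` is Lindelöf then `W` is covered by countably many members of the cover. -/
theorem statement0 {X : Type u} [tX : TopologicalSpace X] (W : Set X) (𝒰 : Set (Set X))
    (hopen : ∀ U ∈ 𝒰, IsOpen U)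
    (hcov : ∀ C ⊆ W, #↥C ≤ tightnessOf tX → ∃ U ∈ 𝒰, closure C ⊆ U) :
    closure W ⊆ ⋃₀ 𝒰 ∧
      (LindelofSpace X → ∃ 𝒱 ⊆ 𝒰, 𝒱.Countable ∧ W ⊆ ⋃₀ 𝒱) := by
  have hmem : tightnessOf tX ∈ {κ : Cardinal.{u} | ℵ₀ ≤ κ ∧
      ∀ (A : Set X) (p : X), p ∈ @closure X tX A →
      ∃ B ⊆ A, #↥B ≤ κ ∧ p ∈ @closure X tX B} := by
    apply csInf_mem
    refine ⟨ℵ₀ ⊔ #X, le_sup_left, fun A p hp => ⟨A, subset_rfl, ?_, hp⟩⟩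
    exact le_trans (Cardinal.mk_set_le A) le_sup_right
  have hsub : closure W ⊆ ⋃₀ 𝒰 := by
    intro p hp
    obtain ⟨B, hBW, hBc, hpB⟩ := hmem.2 W p hp
    obtain ⟨U, hU, hBU⟩ := hcov B hBW hBc
    exact ⟨U, hU, hBU hpB⟩
  refine ⟨hsub, fun hL => ?_⟩
  have hLc : IsLindelof (closure W) := isClosed_closure.isLindelof
  obtain ⟨r, hr, hcover⟩ := hLc.elim_countable_subcover (fun U : 𝒰 => (U : Set X))
    (fun U => hopen U U.2) (by
      intro x hx
      obtain ⟨U, hU, hxU⟩ := hsub hx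
      exact mem_iUnion.2 ⟨⟨U, hU⟩, hxU⟩)
  refine ⟨(fun U : 𝒰 => (U : Set X)) '' r, ?_, hr.image _, ?_⟩
  · rintro _ ⟨U, -, rfl⟩; exact U.2
  · intro x hx
    have := hcover (subset_closure hx)
    simp only [mem_iUnion] at this
    obtain ⟨U, hUr, hxU⟩ := this
    exact ⟨U, ⟨U, hUr, rfl⟩, hxU⟩
end

section
/- Every Lindelöf space X is Cl_{t(X)}-Lindelöf, where t(X) is the tightness of X. -/
open Cardinal Set Topology

universe u

/-- every Lindelöf space `X` is `Cl_{t(X)}`-Lindelöf. -/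
theorem statement1 {X : Type u} [tX : TopologicalSpace X] [LindelofSpace X] :
    ClLindelofOf tX (tightnessOf tX) := by
  intro W 𝒰 hopen hcov
  -- tightnessOf is a member of its defining set
  have hmem : tightnessOf tX ∈ {κ : Cardinal.{u} | ℵ₀ ≤ κ ∧
      ∀ (A : Set X) (p : X), p ∈ closure A → ∃ B ⊆ A, #↥B ≤ κ ∧ p ∈ closure B} := by
    apply csInf_mem
    refine ⟨#X ⊔ ℵ₀, le_sup_right, fun A p hp => ⟨A, subset_rfl, ?_, hp⟩⟩
    exact le_trans (Cardinal.mk_le_mk_of_subset (Set.subset_univ A)) <| by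
      simpa using le_sup_left
  obtain ⟨hκ, htight⟩ := hmem
  -- every point of the closure of W lies in some member of 𝒰
  have hcl : ∀ x ∈ closure W, ∃ U ∈ 𝒰, x ∈ U := by
    intro x hx
    obtain ⟨B, hBW, hBcard, hxB⟩ := htight W x hx
    obtain ⟨U, hU, hBU⟩ := hcov B hBW hBcard
    exact ⟨U, hU, hBU hxB⟩
  -- an open cover of X
  set 𝒲 : Set (Set X) := 𝒰 ∪ {(closure W)ᶜ} with h𝒲
  have hop : ∀ i : 𝒲, IsOpen (i : Set X) := by
    rintro ⟨s, hs | hs⟩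
    · exact hopen s hs
    · simp only [Set.mem_singleton_iff] at hs
      subst hs; exact isClosed_closure.isOpen_compl
  have hcover : (Set.univ : Set X) ⊆ ⋃ i : 𝒲, (i : Set X) := by
    intro x _
    by_cases hx : x ∈ closure W
    · obtain ⟨U, hU, hxU⟩ := hcl x hx
      exact Set.mem_iUnion.2 ⟨⟨U, Or.inl hU⟩, hxU⟩
    · exact Set.mem_iUnion.2 ⟨⟨(closure W)ᶜ, Or.inr rfl⟩, hx⟩
  obtain ⟨t, htc, hts⟩ := isLindelof_univ.elim_countable_subcover
    (fun i : 𝒲 => (i : Set X)) hop hcover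
  refine ⟨(Subtype.val '' t) ∩ 𝒰, Set.inter_subset_right,
    ((htc.image _).mono Set.inter_subset_left), ?_⟩
  intro w hw
  have := hts (Set.mem_univ w)
  simp only [Set.mem_iUnion] at this
  obtain ⟨i, hit, hwi⟩ := this
  rcases i.2 with hi | hi
  · exact ⟨i.1, ⟨⟨i, hit, rfl⟩, hi⟩, hwi⟩
  · simp only [Set.mem_singleton_iff] at hi
    exact absurd hwi (by rw [hi]; simpa using subset_closure hw)
end

section
/- If a topological space X has no free sequence of length ω₁ (i.e., every free sequence in X is countable), then X is Cl_ω-Lindelöf: for every subset W of X and every family 𝒰 of open sets such that the closure of every countable subset of W is contained in some member of 𝒰, some countable subfamily of 𝒰 covers W. -/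
open Cardinal Set Topology

universe u

section AuxStatement2

open Cardinal Set

variable {X : Type u}

/-- The countable ordinals (ordinals below `ω₁`). -/
abbrev Sw1 : Type (u+1) := {α : Ordinal.{u} // α < (aleph 1).ord}

/-- Choice of an element of `𝒰` containing the closure of `C`, when one exists. -/
noncomputable def auxChU (tX : TopologicalSpace X) (𝒰 : Set (Set X)) (C : Set X) : Set X :=
  letI := Classical.propDecidable (∃ U ∈ 𝒰, @closure X tX C ⊆ U)
  if h : ∃ U ∈ 𝒰, @closure X tX C ⊆ U then h.choose else ∅

lemma auxChU_spec (tX : TopologicalSpace X) {𝒰 : Set (Set X)} {C : Set X}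
    (h : ∃ U ∈ 𝒰, @closure X tX C ⊆ U) :
    auxChU tX 𝒰 C ∈ 𝒰 ∧ @closure X tX C ⊆ auxChU tX 𝒰 C := by
  simp only [auxChU, dif_pos h]
  exact ⟨h.choose_spec.1, h.choose_spec.2⟩

/-- The image of the initial segment below `β` under a partial sequence `prev`. -/
noncomputable def auxDst (W : Set X) (w₀ : X) (α : Sw1.{u})
    (prev : ∀ β : Sw1.{u}, β < α → {p : X // p ∈ W}) (β : Sw1.{u}) : Set X :=
  (fun j : Sw1.{u} => if h : j < α then (prev j h).1 else w₀) '' {j : Sw1.{u} | j < β ∧ j < α}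

/-- The transfinite recursion producing the free sequence. -/
noncomputable def auxSeq (tX : TopologicalSpace X) (𝒰 : Set (Set X)) (W : Set X) (w₀ : X)
    (hex : ∀ (α : Sw1.{u}) (prev : ∀ β : Sw1.{u}, β < α → {p : X // p ∈ W}),
      ∃ p, p ∈ W ∧ ∀ β : Sw1.{u}, β ≤ α → p ∉ auxChU tX 𝒰 (auxDst W w₀ α prev β)) :
    Sw1.{u} → {p : X // p ∈ W} :=
  WellFounded.fix (IsWellFounded.wf (r := ((· < ·) : Sw1.{u} → Sw1.{u} → Prop)))
    (fun α prev => ⟨(hex α prev).choose, (hex α prev).choose_spec.1⟩)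

lemma auxSeq_spec (tX : TopologicalSpace X) (𝒰 : Set (Set X)) (W : Set X) (w₀ : X)
    (hex : ∀ (α : Sw1.{u}) (prev : ∀ β : Sw1.{u}, β < α → {p : X // p ∈ W}),
      ∃ p, p ∈ W ∧ ∀ β : Sw1.{u}, β ≤ α → p ∉ auxChU tX 𝒰 (auxDst W w₀ α prev β))
    (α : Sw1.{u}) :
    auxSeq tX 𝒰 W w₀ hex α
      = ⟨(hex α (fun β _ => auxSeq tX 𝒰 W w₀ hex β)).choose,
         (hex α (fun β _ => auxSeq tX 𝒰 W w₀ hex β)).choose_spec.1⟩ :=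
  WellFounded.fix_eq _ _ _

end AuxStatement2

/-- if `X` has no free sequence of length `ω₁`, then `X` is `Cl_ω`-Lindelöf. -/
theorem statement2 {X : Type u} [tX : TopologicalSpace X]
    (hfree : ¬∃ x : {α : Ordinal.{u} // α < (aleph 1).ord} → X,
      IsFreeSeqOn tX (aleph 1).ord x) :
    ClLindelofOf tX ℵ₀ := by
  classical
  intro W 𝒰 hopen hcov
  by_contra hnc
  have hnc' : ∀ 𝒱 ⊆ 𝒰, 𝒱.Countable → ∃ w ∈ W, w ∉ ⋃₀ 𝒱 := by
    intro 𝒱 h1 h2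
    by_contra h
    push_neg at h
    exact hnc ⟨𝒱, h1, h2, h⟩
  obtain ⟨w₀, hw₀W, -⟩ := hnc' ∅ (empty_subset _) countable_empty
  -- cardinality facts
  have hcardlt : ∀ β : Sw1.{u}, #↥{j : Sw1.{u} | j < β} ≤ ℵ₀ := by
    intro β
    have hinj : Function.Injective
        (fun j : {j : Sw1.{u} | j < β} => (⟨j.1.1, j.2⟩ : Set.Iio β.1)) := by
      intro a b hab
      have hv : a.1.1 = b.1.1 := congrArg (fun z : Set.Iio β.1 => z.1) hab
      exact Subtype.ext (Subtype.ext hv)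
    have h1 : #↥{j : Sw1.{u} | j < β} ≤ #↥(Set.Iio β.1) := Cardinal.mk_le_of_injective hinj
    rw [Ordinal.mk_Iio_ordinal] at h1
    have h2 : β.1.card ≤ ℵ₀ := by
      have h3 := Cardinal.lt_ord.mp β.2
      have h4 : β.1.card < Order.succ ℵ₀ := by rw [Cardinal.succ_aleph0]; exact h3
      exact Order.lt_succ_iff.mp h4
    calc #↥{j : Sw1.{u} | j < β} ≤ Cardinal.lift.{u+1} β.1.card := h1
      _ ≤ Cardinal.lift.{u+1} ℵ₀ := Cardinal.lift_le.mpr h2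
      _ = ℵ₀ := Cardinal.lift_aleph0
  have hcardle : ∀ β : Sw1.{u}, #↥{j : Sw1.{u} | j ≤ β} ≤ ℵ₀ := by
    intro β
    have hset : {j : Sw1.{u} | j ≤ β} = insert β {j : Sw1.{u} | j < β} := by
      ext j
      simp [le_iff_lt_or_eq, or_comm]
    rw [hset]
    calc #↥(insert β {j : Sw1.{u} | j < β}) ≤ #↥{j : Sw1.{u} | j < β} + 1 :=
          Cardinal.mk_insert_le
      _ ≤ ℵ₀ + ℵ₀ := add_le_add (hcardlt β) Cardinal.one_le_aleph0
      _ = ℵ₀ := Cardinal.aleph0_add_aleph0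
  have himg : ∀ (f : Sw1.{u} → X) (s : Set Sw1.{u}), #↥s ≤ ℵ₀ → #↥(f '' s) ≤ ℵ₀ := by
    intro f s hs
    have h1 := Cardinal.mk_image_le_lift (f := f) (s := s)
    have h2 : Cardinal.lift.{u} #↥s ≤ Cardinal.lift.{u} (ℵ₀ : Cardinal.{u+1}) :=
      Cardinal.lift_le.mpr hs
    rw [Cardinal.lift_aleph0] at h2
    have h3 : Cardinal.lift.{u+1} #↥(f '' s) ≤ Cardinal.lift.{u+1} (ℵ₀ : Cardinal.{u}) := by
      rw [Cardinal.lift_aleph0]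
      exact h1.trans h2
    exact Cardinal.lift_le.mp h3
  -- the key existence statement for the recursion
  have hex : ∀ (α : Sw1.{u}) (prev : ∀ β : Sw1.{u}, β < α → {p : X // p ∈ W}),
      ∃ p, p ∈ W ∧ ∀ β : Sw1.{u}, β ≤ α → p ∉ auxChU tX 𝒰 (auxDst W w₀ α prev β) := by
    intro α prev
    have hDsub : ∀ β : Sw1.{u}, auxDst W w₀ α prev β ⊆ W := by
      rintro β y ⟨j, hj, rfl⟩
      simp only [dif_pos hj.2]
      exact (prev j hj.2).2
    have hDcnt : ∀ β : Sw1.{u}, #↥(auxDst W w₀ α prev β) ≤ ℵ₀ := by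
      intro β
      apply himg
      exact le_trans (Cardinal.mk_le_mk_of_subset (fun j hj => hj.1)) (hcardlt β)
    have hDex : ∀ β : Sw1.{u}, ∃ U ∈ 𝒰, closure (auxDst W w₀ α prev β) ⊆ U :=
      fun β => hcov _ (hDsub β) (hDcnt β)
    have h𝒱sub : ((fun β : Sw1.{u} => auxChU tX 𝒰 (auxDst W w₀ α prev β)) ''
        {β : Sw1.{u} | β ≤ α}) ⊆ 𝒰 := by
      rintro V ⟨β, hβ, rfl⟩
      exact (auxChU_spec tX (hDex β)).1
    have h𝒱cnt : ((fun β : Sw1.{u} => auxChU tX 𝒰 (auxDst W w₀ α prev β)) ''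
        {β : Sw1.{u} | β ≤ α}).Countable :=
      (Cardinal.le_aleph0_iff_set_countable.mp (hcardle α)).image _
    obtain ⟨p, hpW, hp⟩ := hnc' _ h𝒱sub h𝒱cnt
    refine ⟨p, hpW, fun β hβ hmem => hp ?_⟩
    exact ⟨_, ⟨β, hβ, rfl⟩, hmem⟩
  -- the free sequence
  let x0 : Sw1.{u} → {p : X // p ∈ W} := auxSeq tX 𝒰 W w₀ hex
  let x : Sw1.{u} → X := fun α => (x0 α).1
  have hxW : ∀ α, x α ∈ W := fun α => (x0 α).2
  have hchoose : ∀ α : Sw1.{u}, x α = (hex α (fun j _ => x0 j)).choose := by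
    intro α
    show (auxSeq tX 𝒰 W w₀ hex α).1 = _
    rw [auxSeq_spec]
  have hEq : ∀ (α β : Sw1.{u}), β ≤ α →
      auxDst W w₀ α (fun j _ => x0 j) β = x '' {j : Sw1.{u} | j < β} := by
    intro α β hβα
    ext y
    constructor
    · rintro ⟨j, hj, rfl⟩
      exact ⟨j, hj.1, by simp only [dif_pos hj.2]; rfl⟩
    · rintro ⟨j, hj, rfl⟩
      have hjα : j < α := lt_of_lt_of_le hj hβα
      exact ⟨j, ⟨hj, hjα⟩, by simp only [dif_pos hjα]; rfl⟩
  have hkey : ∀ α β : Sw1.{u}, β ≤ α → x α ∉ auxChU tX 𝒰 (x '' {j : Sw1.{u} | j < β}) := by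
    intro α β hβα
    have h2 := (hex α (fun j _ => x0 j)).choose_spec.2 β hβα
    rw [hEq α β hβα, ← hchoose α] at h2
    exact h2
  -- conclude: x is a free sequence of length ω₁
  apply hfree
  refine ⟨x, fun i => ?_⟩
  have hEsub : x '' {j : Sw1.{u} | j < i} ⊆ W := by
    rintro y ⟨j, _, rfl⟩
    exact hxW j
  have hEcnt : #↥(x '' {j : Sw1.{u} | j < i}) ≤ ℵ₀ := himg x _ (hcardlt i)
  obtain ⟨hU𝒰, hUcl⟩ := auxChU_spec tX (hcov _ hEsub hEcnt)
  have h2 : closure (x '' {j : Sw1.{u} | i ≤ j}) ⊆ (auxChU tX 𝒰 (x '' {j : Sw1.{u} | j < i}))ᶜ := by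
    apply closure_minimal
    · rintro y ⟨j, hj, rfl⟩
      exact hkey j i hj
    · exact (hopen _ hU𝒰).isClosed_compl
  apply Set.eq_empty_of_subset_empty
  rintro y ⟨h1', h2'⟩
  exact (h2 h2') (hUcl h1')
end

section
/- Let X be a regular (T3) topological space and κ an infinite cardinal. If X is Cl_κ-Lindelöf, then the tightness of the G_δ-modification X_δ is at most 2^κ: whenever A ⊆ X and p lies in the closure of A in X_δ, there exists W ⊆ A with |W| ≤ 2^κ such that p lies in the closure of W in X_δ. -/
open Cardinal Set Topology
open scoped Classical
set_option linter.unusedSectionVars false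
universe u





section Aux
variable {X : Type u} [tX : TopologicalSpace X] [T3Space X]

lemma aux_shrink (p : X) {O : Set X} (hO : IsOpen O) (hp : p ∈ O) :
    ∃ V : Set X, IsOpen V ∧ p ∈ V ∧ closure V ⊆ O := by
  obtain ⟨t, ht, htc, hts⟩ := exists_mem_nhds_isClosed_subset (hO.mem_nhds hp)
  exact ⟨interior t, isOpen_interior, mem_interior_iff_mem_nhds.2 ht,
    (closure_minimal interior_subset htc).trans hts⟩

lemma aux_sep (p : X) {C : Set X} (hC : p ∉ closure C) :
    ∃ U : Set X, IsOpen U ∧ closure C ⊆ U ∧ p ∉ closure U := by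
  obtain ⟨V, hVo, hpV, hVc⟩ := aux_shrink p (isClosed_closure (s := C)).isOpen_compl hC
  refine ⟨(closure V)ᶜ, isClosed_closure.isOpen_compl, fun x hx hxV => hVc hxV hx, fun hpc => ?_⟩
  have : (closure V)ᶜ ⊆ Vᶜ := compl_subset_compl.2 subset_closure
  exact (closure_minimal this hVo.isClosed_compl) hpc hpV

noncomputable def uF (p : X) (C : Set X) : Set X :=
  if h : p ∉ closure C then (aux_sep p h).choose else univ

lemma uF_spec (p : X) {C : Set X} (h : p ∉ closure C) :
    IsOpen (uF p C) ∧ closure C ⊆ uF p C ∧ p ∉ closure (uF p C) := by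
  rw [uF, dif_pos h]; exact (aux_sep p h).choose_spec

noncomputable def sF (p : X) (O U : Set X) : Set X :=
  if h : (IsOpen O ∧ p ∈ O) ∧ p ∉ closure U then
    (aux_shrink p (h.1.1.sdiff isClosed_closure) ⟨h.1.2, h.2⟩).choose else univ

lemma sF_spec (p : X) {O U : Set X} (h1 : IsOpen O) (h2 : p ∈ O) (h3 : p ∉ closure U) :
    IsOpen (sF p O U) ∧ p ∈ sF p O U ∧ closure (sF p O U) ⊆ O \ closure U := by
  rw [sF, dif_pos ⟨⟨h1, h2⟩, h3⟩]
  exact (aux_shrink p ((h1.sdiff isClosed_closure)) ⟨h2, h3⟩).choose_spec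

variable (κ : Cardinal.{u}) (p : X) (A : Set X)

/-- task pool -/
def TS (S : Set X) : Set (Set X) :=
  {U | ∃ C : Set X, C ⊆ S ∧ #↥C ≤ κ ∧ p ∉ closure C ∧ U = uF p C}

/-- open pool, stratified -/
noncomputable def OS (S : Set X) : ℕ → Set (Set X)
  | 0 => ({Set.univ} : Set (Set X))
  | n+1 => OS S n ∪ (fun q : Set X × Set X => sF p q.1 q.2) '' ((OS S n) ×ˢ TS κ p S)

def Gd (f : ℕ → Set X) : Set X := ⋂ n, closure (f n)

noncomputable def pk (f : ℕ → Set X) : X :=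
  if h : (Gd f ∩ A).Nonempty then h.choose else p

def Phi (S : Set X) : Set X :=
  S ∪ {x | ∃ f : ℕ → Set X, (∀ n, f n ∈ ⋃ m, OS κ p S m) ∧ (Gd f ∩ A).Nonempty ∧ x = pk p A f}

noncomputable def lam : Ordinal.{u} := (Order.succ κ).ord

noncomputable def Wstage : (lam κ).ToType → Set X :=
  (IsWellFounded.wf (α := (lam κ).ToType) (r := (· < ·))).fix
    (fun i rec => Phi κ p A (⋃ j : {j : (lam κ).ToType // j < i}, rec j.1 j.2))

lemma Wstage_eq (i : (lam κ).ToType) :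
    Wstage κ p A i = Phi κ p A (⋃ j : {j : (lam κ).ToType // j < i}, Wstage κ p A j.1) :=
  WellFounded.fix_eq _ _ i

noncomputable def Wfin : Set X := ⋃ i, Wstage κ p A i

lemma subset_Phi (S : Set X) : S ⊆ Phi κ p A S := subset_union_left

lemma TS_mono {S S' : Set X} (h : S ⊆ S') : TS κ p S ⊆ TS κ p S' := by
  rintro U ⟨C, hC, h2, h3, h4⟩; exact ⟨C, hC.trans h, h2, h3, h4⟩

lemma OS_mono {S S' : Set X} (h : S ⊆ S') (n : ℕ) : OS κ p S n ⊆ OS κ p S' n := by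
  induction n with
  | zero => exact le_rfl
  | succ n ih =>
    exact union_subset_union ih (image_mono (prod_mono ih (TS_mono κ p h)))

lemma Phi_mono {S S' : Set X} (h : S ⊆ S') : Phi κ p A S ⊆ Phi κ p A S' := by
  apply union_subset_union h
  rintro x ⟨f, hf, h2, h3⟩
  exact ⟨f, fun n => iUnion_mono (fun m => OS_mono κ p h m) (hf n), h2, h3⟩

lemma Wstage_mono : Monotone (Wstage κ p A) := by
  intro i j hij
  rcases eq_or_lt_of_le hij with rfl | hij
  · exact le_rfl
  · calc Wstage κ p A i ⊆ ⋃ l : {l : (lam κ).ToType // l < j}, Wstage κ p A l.1 :=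
          subset_iUnion_of_subset ⟨i, hij⟩ le_rfl
      _ ⊆ Wstage κ p A j := by rw [Wstage_eq]; exact subset_Phi κ p A _

lemma Wstage_subset_A (i : (lam κ).ToType) : Wstage κ p A i ⊆ A := by
  induction i using WellFoundedLT.induction with
  | ind i ih =>
    rw [Wstage_eq]
    rintro x (hx | ⟨f, hf, h2, h3⟩)
    · obtain ⟨j, hj⟩ := mem_iUnion.1 hx
      exact ih j.1 j.2 hj
    · rw [h3, pk, dif_pos h2]
      exact h2.choose_spec.2

lemma Wfin_subset_A : Wfin κ p A ⊆ A :=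
  iUnion_subset (Wstage_subset_A κ p A)

lemma pk_mem {f : ℕ → Set X} (h2 : (Gd f ∩ A).Nonempty) : pk p A f ∈ Gd f ∩ A := by
  rw [pk, dif_pos h2]; exact h2.choose_spec

lemma TS_open {S U : Set X} (h : U ∈ TS κ p S) : IsOpen U ∧ p ∉ closure U := by
  obtain ⟨C, _, _, h3, rfl⟩ := h
  exact ⟨(uF_spec p h3).1, (uF_spec p h3).2.2⟩

lemma OS_prop {S : Set X} : ∀ {n : ℕ} {O : Set X}, O ∈ OS κ p S n → IsOpen O ∧ p ∈ O := by
  intro n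
  induction n with
  | zero =>
    intro O h
    rw [mem_singleton_iff.1 h]; exact ⟨isOpen_univ, mem_univ p⟩
  | succ n ih =>
    intro O h
    rcases h with h | ⟨⟨O', U⟩, ⟨hO', hU⟩, rfl⟩
    · exact ih h
    · have h1 := ih hO'
      have h2 := TS_open κ p hU
      obtain ⟨s1, s2, _⟩ := sF_spec p h1.1 h1.2 h2.2
      exact ⟨s1, s2⟩

lemma exists_stage_of_small (hκ : ℵ₀ ≤ κ) {C : Set X} (hC : C ⊆ Wfin κ p A)
    (hc : #↥C ≤ κ) : ∃ i, C ⊆ Wstage κ p A i := by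
  have hch : ∀ x : C, ∃ i, (x : X) ∈ Wstage κ p A i := fun x => mem_iUnion.1 (hC x.2)
  choose g hg using hch
  haveI : IsWellOrder (lam κ).ToType (· < ·) := isWellOrder_lt
  have hbd : Set.Bounded (· < ·) (Set.range g) := by
    apply not_isCofinal_iff.1
    intro hcof
    refine absurd (Order.cof_le hcof) (not_le.2 ?_)
    rw [Ordinal.cof_toType]
    have : (lam κ).cof = Order.succ κ := (Cardinal.isRegular_succ hκ).cof_eq
    rw [this]
    exact lt_of_le_of_lt mk_range_le (lt_of_le_of_lt hc (Order.lt_succ κ))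
  obtain ⟨a, ha⟩ := hbd
  refine ⟨a, fun x hx => ?_⟩
  exact Wstage_mono κ p A (le_of_lt (ha _ (mem_range_self ⟨x, hx⟩))) (hg ⟨x, hx⟩)

lemma exists_gt_stage (hκ : ℵ₀ ≤ κ) (i : (lam κ).ToType) : ∃ j, i < j := by
  haveI : NoMaxOrder (lam κ).ToType :=
    Cardinal.noMaxOrder (hκ.trans (le_of_lt (Order.lt_succ κ)))
  exact exists_gt i

lemma pick_closure (hκ : ℵ₀ ≤ κ) {f : ℕ → Set X} (i : (lam κ).ToType)
    (hf : ∀ n, f n ∈ ⋃ m, OS κ p (Wstage κ p A i) m) (h2 : (Gd f ∩ A).Nonempty) :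
    pk p A f ∈ Wfin κ p A := by
  obtain ⟨j, hj⟩ := exists_gt_stage κ hκ i
  have hsub : Wstage κ p A i ⊆ ⋃ l : {l : (lam κ).ToType // l < j}, Wstage κ p A l.1 :=
    subset_iUnion_of_subset ⟨i, hj⟩ le_rfl
  have : pk p A f ∈ Wstage κ p A j := by
    rw [Wstage_eq]
    exact Or.inr ⟨f, fun n => iUnion_mono (fun m => OS_mono κ p hsub m) (hf n), h2, rfl⟩
  exact mem_iUnion.2 ⟨j, this⟩

-- cardinality helpers
lemma mk_iUnion_nat_le {α : Type u} (f : ℕ → Set α) (c : Cardinal.{u}) (hc : ℵ₀ ≤ c)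
    (h : ∀ n, #↥(f n) ≤ c) : #↥(⋃ n, f n) ≤ c := by
  have he : ⋃ n, f n = ⋃ i : ULift.{u} ℕ, f i.down := by
    ext x; simp only [mem_iUnion]
    exact ⟨fun ⟨n, hn⟩ => ⟨⟨n⟩, hn⟩, fun ⟨i, hi⟩ => ⟨i.down, hi⟩⟩
  rw [he]
  refine (mk_iUnion_le _).trans ?_
  have h1 : #(ULift.{u} ℕ) = ℵ₀ := by simp
  rw [h1]
  refine le_trans (mul_le_mul' le_rfl (ciSup_le' fun i => h i.down)) ?_
  rw [mul_eq_max le_rfl hc]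
  exact max_le hc le_rfl

lemma mk_iUnion_le_of {ι : Type u} {α : Type u} (f : ι → Set α) (c : Cardinal.{u})
    (hc : ℵ₀ ≤ c) (h1 : #ι ≤ c) (h2 : ∀ i, #↥(f i) ≤ c) : #↥(⋃ i, f i) ≤ c := by
  refine (mk_iUnion_le _).trans ?_
  exact le_trans (mul_le_mul' h1 (ciSup_le' h2)) (le_of_eq (mul_eq_self hc))

lemma mk_arrow_nat_le {Z : Type u} (c : Cardinal.{u}) (hc0 : c ≠ 0) (hZ : #Z ≤ c)
    (κ' : Cardinal.{u}) (hκ' : ℵ₀ ≤ κ') : #(ℕ → Z) ≤ (c ^ κ' : Cardinal.{u}) := by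
  have he : #(ℕ → Z) = #(ULift.{u} ℕ → Z) :=
    mk_congr (Equiv.arrowCongr Equiv.ulift (Equiv.refl Z)).symm
  rw [he, ← Cardinal.power_def]
  have h1 : #(ULift.{u} ℕ) = ℵ₀ := by simp
  rw [h1]
  calc #Z ^ (ℵ₀ : Cardinal.{u}) ≤ c ^ (ℵ₀ : Cardinal.{u}) := power_le_power_right hZ
    _ ≤ c ^ κ' := power_le_power_left hc0 hκ'

lemma aleph0_le_two_pow (hκ : ℵ₀ ≤ κ) : ℵ₀ ≤ (2 ^ κ : Cardinal.{u}) :=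
  hκ.trans (le_of_lt (Cardinal.cantor κ))

lemma two_pow_pow (hκ : ℵ₀ ≤ κ) : ((2 ^ κ : Cardinal.{u}) ^ κ) = 2 ^ κ := by
  rw [← power_mul, mul_eq_self hκ]

lemma mk_TS_le (hκ : ℵ₀ ≤ κ) {S : Set X} (hS : #↥S ≤ 2 ^ κ) : #↥(TS κ p S) ≤ 2 ^ κ := by
  have hsub : TS κ p S ⊆ (uF p) '' {C : Set X | C ⊆ S ∧ #↥C ≤ κ} := by
    rintro U ⟨C, h1, h2, h3, rfl⟩; exact ⟨C, ⟨h1, h2⟩, rfl⟩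
  refine ((mk_le_mk_of_subset hsub).trans mk_image_le).trans ?_
  have h1 : #↥{C : Set X | C ⊆ S ∧ #↥C ≤ κ} ≤ max #↥S ℵ₀ ^ κ := mk_bounded_subset_le S κ
  refine h1.trans ?_
  have h2 : max #↥S ℵ₀ ≤ (2 ^ κ : Cardinal.{u}) := max_le hS (aleph0_le_two_pow κ hκ)
  exact (power_le_power_right h2).trans (le_of_eq (two_pow_pow κ hκ))

lemma mk_OS_le (hκ : ℵ₀ ≤ κ) {S : Set X} (hS : #↥S ≤ 2 ^ κ) :
    ∀ n, #↥(OS κ p S n) ≤ 2 ^ κ := by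
  intro n
  induction n with
  | zero =>
    simp only [OS]
    rw [mk_singleton]
    exact one_le_aleph0.trans (aleph0_le_two_pow κ hκ)
  | succ n ih =>
    refine (mk_union_le _ _).trans (add_le_of_le (aleph0_le_two_pow κ hκ) ih ?_)
    refine mk_image_le.trans ?_
    have he : #↥(OS κ p S n ×ˢ TS κ p S) = #(↥(OS κ p S n) × ↥(TS κ p S)) :=
      mk_congr (Equiv.Set.prod _ _)
    rw [he, mk_prod, lift_id, lift_id]
    exact (mul_le_mul' ih (mk_TS_le κ p hκ hS)).trans
      (le_of_eq (mul_eq_self (aleph0_le_two_pow κ hκ)))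

lemma mk_OSU_le (hκ : ℵ₀ ≤ κ) {S : Set X} (hS : #↥S ≤ 2 ^ κ) :
    #↥(⋃ m, OS κ p S m) ≤ 2 ^ κ :=
  mk_iUnion_nat_le _ _ (aleph0_le_two_pow κ hκ) (mk_OS_le κ p hκ hS)

lemma mk_Phi_le (hκ : ℵ₀ ≤ κ) {S : Set X} (hS : #↥S ≤ 2 ^ κ) :
    #↥(Phi κ p A S) ≤ 2 ^ κ := by
  refine (mk_union_le _ _).trans (add_le_of_le (aleph0_le_two_pow κ hκ) hS ?_)
  have hsub : {x | ∃ f : ℕ → Set X, (∀ n, f n ∈ ⋃ m, OS κ p S m) ∧ (Gd f ∩ A).Nonempty ∧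
      x = pk p A f} ⊆ (fun f : {f : ℕ → Set X // ∀ n, f n ∈ ⋃ m, OS κ p S m} => pk p A f.1) ''
      Set.univ := by
    rintro x ⟨f, hf, h2, rfl⟩
    exact ⟨⟨f, hf⟩, mem_univ _, rfl⟩
  refine ((mk_le_mk_of_subset hsub).trans mk_image_le).trans ?_
  rw [mk_univ]
  have hinj : #{f : ℕ → Set X // ∀ n, f n ∈ ⋃ m, OS κ p S m} ≤
      #(ℕ → ↥(⋃ m, OS κ p S m)) := by
    refine ⟨⟨fun f => fun n => ⟨f.1 n, f.2 n⟩, ?_⟩⟩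
    intro f g hfg
    apply Subtype.ext; funext n
    exact congrArg Subtype.val (congrFun hfg n)
  refine hinj.trans ?_
  refine (mk_arrow_nat_le (2 ^ κ) ?_ (mk_OSU_le κ p hκ hS) κ hκ).trans
    (le_of_eq (two_pow_pow κ hκ))
  exact ne_of_gt (lt_of_lt_of_le aleph0_pos (aleph0_le_two_pow κ hκ))

lemma mk_Wstage_le (hκ : ℵ₀ ≤ κ) : ∀ i, #↥(Wstage κ p A i) ≤ 2 ^ κ := by
  intro i
  induction i using WellFoundedLT.induction with
  | ind i ih =>
    rw [Wstage_eq]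
    refine mk_Phi_le κ p A hκ ?_
    refine mk_iUnion_le_of _ _ (aleph0_le_two_pow κ hκ) ?_ (fun j => ih j.1 j.2)
    refine (mk_subtype_le _).trans ?_
    rw [Cardinal.mk_toType, lam, Cardinal.card_ord]
    exact (Order.succ_le_of_lt (Cardinal.cantor κ))

lemma mk_Wfin_le (hκ : ℵ₀ ≤ κ) : #↥(Wfin κ p A) ≤ 2 ^ κ := by
  refine mk_iUnion_le_of _ _ (aleph0_le_two_pow κ hκ) ?_ (mk_Wstage_le κ p A hκ)
  rw [Cardinal.mk_toType, lam, Cardinal.card_ord]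
  exact (Order.succ_le_of_lt (Cardinal.cantor κ))

-- the cover extraction
lemma cover_ex (hκ : ℵ₀ ≤ κ) (hh : ClLindelofOf tX κ) {V1 : Set X} (hV1 : IsOpen V1)
    (hpV1 : p ∈ V1) (O : Set X) :
    ∃ e : ℕ → Set X,
      (∀ k, ∃ C : Set X, C ⊆ (Wfin κ p A ∩ closure O) \ V1 ∧ #↥C ≤ κ ∧ p ∉ closure C ∧
        e k = uF p C) ∧
      (Wfin κ p A ∩ closure O) \ V1 ⊆ ⋃ k, e k := by
  set Si := (Wfin κ p A ∩ closure O) \ V1 with hSi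
  have hnotin : ∀ C : Set X, C ⊆ Si → p ∉ closure C := by
    intro C hC hpc
    have : closure C ⊆ V1ᶜ :=
      closure_minimal (fun x hx => (hC hx).2) hV1.isClosed_compl
    exact this hpc hpV1
  set 𝒰 : Set (Set X) := {U | ∃ C : Set X, C ⊆ Si ∧ #↥C ≤ κ ∧ U = uF p C} with h𝒰
  have hopens : ∀ U ∈ 𝒰, IsOpen U := by
    rintro U ⟨C, h1, h2, rfl⟩
    exact (uF_spec p (hnotin C h1)).1
  have hcover : ∀ C ⊆ Si, #↥C ≤ κ → ∃ U ∈ 𝒰, closure C ⊆ U := by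
    intro C hC hCκ
    exact ⟨uF p C, ⟨C, hC, hCκ, rfl⟩, (uF_spec p (hnotin C hC)).2.1⟩
  obtain ⟨𝒱, h𝒱sub, h𝒱c, h𝒱cov⟩ := hh Si 𝒰 hopens hcover
  have hmem : uF p ∅ ∈ 𝒰 := ⟨∅, empty_subset _, by simp, rfl⟩
  have hne : (𝒱 ∪ {uF p ∅}).Nonempty := ⟨uF p ∅, Or.inr rfl⟩
  obtain ⟨e, he⟩ := (h𝒱c.union (countable_singleton _)).exists_eq_range hne
  refine ⟨e, ?_, ?_⟩
  · intro k
    have : e k ∈ 𝒱 ∪ {uF p ∅} := he ▸ mem_range_self k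
    rcases this with hk | hk
    · obtain ⟨C, h1, h2, h4⟩ := h𝒱sub hk
      exact ⟨C, h1, h2, hnotin C h1, h4⟩
    · rw [mem_singleton_iff.1 hk]
      exact ⟨∅, empty_subset _, by simp, by simp, rfl⟩
  · intro x hx
    obtain ⟨U, hU, hxU⟩ := h𝒱cov hx
    have : U ∈ 𝒱 ∪ {uF p ∅} := Or.inl hU
    rw [he] at this
    obtain ⟨k, rfl⟩ := this
    exact mem_iUnion.2 ⟨k, hxU⟩

-- the diagonal shrinking recursion
noncomputable def FF (p : X) (E : ℕ → Set X → ℕ → Set X) : ℕ → ℕ → Set X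
  | 0 => fun _ => Set.univ
  | m + 1 => fun j =>
      if j ≤ m then FF p E m j
      else sF p (FF p E m m) (E (Nat.unpair m).1 (FF p E m (Nat.unpair m).1) (Nat.unpair m).2)

noncomputable def VV (p : X) (E : ℕ → Set X → ℕ → Set X) (m : ℕ) : Set X := FF p E m m

lemma FF_coh (E : ℕ → Set X → ℕ → Set X) : ∀ m j, j ≤ m → FF p E m j = VV p E j := by
  intro m
  induction m with
  | zero => intro j hj; interval_cases j; rfl
  | succ m ih =>
    intro j hj
    rcases Nat.lt_or_ge j (m + 1) with hlt | hge
    · show FF p E (m + 1) j = VV p E j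
      rw [FF]
      simp only []
      rw [if_pos (Nat.lt_succ_iff.1 hlt)]
      exact ih j (Nat.lt_succ_iff.1 hlt)
    · have : j = m + 1 := le_antisymm hj hge
      subst this; rfl

lemma VV_succ (E : ℕ → Set X → ℕ → Set X) (m : ℕ) :
    VV p E (m + 1) =
      sF p (VV p E m) (E (Nat.unpair m).1 (VV p E (Nat.unpair m).1) (Nat.unpair m).2) := by
  show FF p E (m + 1) (m + 1) = _
  rw [FF]
  simp only []
  rw [if_neg (by omega : ¬ (m + 1 ≤ m))]
  rw [FF_coh p E m m le_rfl, FF_coh p E m (Nat.unpair m).1 (Nat.unpair_left_le m)]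

lemma VV_props (E : ℕ → Set X → ℕ → Set X)
    (hE : ∀ i O k, IsOpen (E i O k) ∧ p ∉ closure (E i O k)) :
    ∀ m, IsOpen (VV p E m) ∧ p ∈ VV p E m := by
  intro m
  induction m with
  | zero => exact ⟨isOpen_univ, mem_univ p⟩
  | succ m ih =>
    rw [VV_succ]
    obtain ⟨s1, s2, _⟩ := sF_spec p ih.1 ih.2 (hE _ _ _).2
    exact ⟨s1, s2⟩

lemma VV_closure (E : ℕ → Set X → ℕ → Set X)
    (hE : ∀ i O k, IsOpen (E i O k) ∧ p ∉ closure (E i O k)) (m : ℕ) :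
    closure (VV p E (m + 1)) ⊆
      VV p E m \ closure (E (Nat.unpair m).1 (VV p E (Nat.unpair m).1) (Nat.unpair m).2) := by
  rw [VV_succ]
  exact (sF_spec p (VV_props p E hE m).1 (VV_props p E hE m).2 (hE _ _ _).2).2.2

lemma machine (hκ : ℵ₀ ≤ κ) (hh : ClLindelofOf tX κ) (V : ℕ → Set X)
    (hVo : ∀ n, IsOpen (V n)) (hVp : ∀ n, p ∈ V n) (hVc : ∀ n, closure (V (n+1)) ⊆ V n)
    (hGW : (⋂ n, V n) ∩ Wfin κ p A = ∅) :
    ∃ g : ℕ → Set X, (∀ n, IsOpen (g n)) ∧ p ∈ ⋂ n, g n ∧ (⋂ n, g n) ∩ A = ∅ := by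
  choose E hspec using fun (i : ℕ) (O : Set X) =>
    cover_ex κ p A hκ hh (hVo (i+1)) (hVp (i+1)) O
  have hEok : ∀ i O k, IsOpen (E i O k) ∧ p ∉ closure (E i O k) := by
    intro i O k
    obtain ⟨C, _, _, h3, hEq⟩ := (hspec i O).1 k
    rw [hEq]
    exact ⟨(uF_spec p h3).1, (uF_spec p h3).2.2⟩
  set g := VV p E with hg
  have hgo : ∀ m, IsOpen (g m) := fun m => (VV_props p E hEok m).1
  have hgp : ∀ m, p ∈ g m := fun m => (VV_props p E hEok m).2
  have hg0 : g 0 = Set.univ := rfl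
  have hGdEq : (⋂ m, closure (g m)) = ⋂ m, g m := by
    apply Subset.antisymm
    · intro y hy
      apply mem_iInter.2; intro m
      exact ((VV_closure p E hEok m) (mem_iInter.1 hy (m+1))).1
    · exact iInter_mono (fun m => subset_closure)
  have claim1 : (⋂ m, g m) ∩ Wfin κ p A = ∅ := by
    rw [eq_empty_iff_forall_notMem]
    rintro a ⟨haG, haW⟩
    have ha1 : ∀ i, a ∈ V (i + 1) := by
      intro i; by_contra hna
      have haSi : a ∈ (Wfin κ p A ∩ closure (g i)) \ V (i+1) :=
        ⟨⟨haW, subset_closure (mem_iInter.1 haG i)⟩, hna⟩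
      obtain ⟨k, hk⟩ := mem_iUnion.1 ((hspec i (g i)).2 haSi)
      have hcl := VV_closure p E hEok (Nat.pair i k)
      simp only [Nat.unpair_pair] at hcl
      have haG' : a ∈ closure (g (Nat.pair i k + 1)) :=
        subset_closure (mem_iInter.1 haG _)
      exact (hcl haG').2 (subset_closure hk)
    have haV : a ∈ ⋂ n, V n := by
      apply mem_iInter.2; intro n
      cases n with
      | zero => exact hVc 0 (subset_closure (ha1 0))
      | succ n => exact ha1 n
    rw [eq_empty_iff_forall_notMem] at hGW
    exact hGW a ⟨haV, haW⟩
  have claim2 : (⋂ m, g m) ∩ A = ∅ := by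
    by_contra hne
    obtain ⟨x, hx⟩ := Set.nonempty_iff_ne_empty.2 hne
    have hC : ∀ m : ℕ, ∃ C : Set X, C ⊆ Wfin κ p A ∧ #↥C ≤ κ ∧ p ∉ closure C ∧
        E (Nat.unpair m).1 (g (Nat.unpair m).1) (Nat.unpair m).2 = uF p C := by
      intro m
      obtain ⟨C, h1, h2, h3, h4⟩ :=
        (hspec (Nat.unpair m).1 (g (Nat.unpair m).1)).1 (Nat.unpair m).2
      exact ⟨C, fun y hy => (h1 hy).1.1, h2, h3, h4⟩
    choose CC c1 c2 c3 c4 using hC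
    have hDW : (⋃ m, CC m) ⊆ Wfin κ p A := iUnion_subset c1
    have hDκ : #↥(⋃ m, CC m) ≤ κ := mk_iUnion_nat_le _ κ hκ c2
    obtain ⟨istage, hist⟩ := exists_stage_of_small κ p A hκ hDW hDκ
    have hCst : ∀ m, CC m ⊆ Wstage κ p A istage :=
      fun m y hy => hist (mem_iUnion.2 ⟨m, hy⟩)
    have hgOS : ∀ m, g m ∈ ⋃ n, OS κ p (Wstage κ p A istage) n := by
      intro m
      induction m with
      | zero =>
        refine mem_iUnion.2 ⟨0, ?_⟩
        rw [hg0]; rfl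
      | succ m ih =>
        obtain ⟨n, hn⟩ := mem_iUnion.1 ih
        refine mem_iUnion.2 ⟨n+1, ?_⟩
        have : g (m+1) = sF p (g m) (uF p (CC m)) := by
          rw [hg, VV_succ, c4 m]
        rw [this]
        exact Or.inr ⟨(g m, uF p (CC m)), ⟨hn, ⟨CC m, hCst m, c2 m, c3 m, rfl⟩⟩, rfl⟩
    have hGd' : Gd g = ⋂ m, g m := hGdEq
    have hne2 : (Gd g ∩ A).Nonempty := by
      rw [hGd']
      exact ⟨x, hx⟩
    have hpk := pick_closure κ p A hκ istage hgOS hne2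
    have hpkG := pk_mem p A hne2
    rw [eq_empty_iff_forall_notMem] at claim1
    refine claim1 (pk p A g) ⟨?_, hpk⟩
    have := hpkG.1
    rw [hGd'] at this
    exact this
  exact ⟨g, hgo, mem_iInter.2 hgp, claim2⟩

lemma gdelta_nbhd {B : Set X} (hB : (gDelta tX).IsOpen B) :
    ∀ q ∈ B, ∃ G : Set X, IsGδ G ∧ q ∈ G ∧ G ⊆ B := by
  have hB' : TopologicalSpace.GenerateOpen {s : Set X | IsGδ s} B := hB
  clear hB
  induction hB' with
  | basic u hu => exact fun q hq => ⟨u, hu, hq, le_rfl⟩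
  | univ => exact fun q hq => ⟨Set.univ, IsGδ.univ, hq, le_rfl⟩
  | inter u v hu hv ihu ihv =>
    intro q hq
    obtain ⟨G1, h1, h2, h3⟩ := ihu q hq.1
    obtain ⟨G2, h4, h5, h6⟩ := ihv q hq.2
    exact ⟨G1 ∩ G2, h1.inter h4, ⟨h2, h5⟩, fun y hy => ⟨h3 hy.1, h6 hy.2⟩⟩
  | sUnion S hS ih =>
    intro q hq
    obtain ⟨t, ht, hqt⟩ := hq
    obtain ⟨G, h1, h2, h3⟩ := ih t ht q hqt
    exact ⟨G, h1, h2, h3.trans (subset_sUnion_of_mem ht)⟩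

lemma seq_of_gdelta {G₀ : Set X} (hG : IsGδ G₀) (hpG : p ∈ G₀) :
    ∃ V : ℕ → Set X, (∀ n, IsOpen (V n)) ∧ (∀ n, p ∈ V n) ∧
      (∀ n, closure (V (n+1)) ⊆ V n) ∧ (⋂ n, V n) ⊆ G₀ := by
  obtain ⟨O, hOo, rfl⟩ := isGδ_iff_eq_iInter_nat.1 hG
  have hpe : p ∉ closure (∅ : Set X) := by simp
  let V : ℕ → Set X := fun n =>
    Nat.rec (sF p (O 0) ∅) (fun n Vn => sF p (Vn ∩ O (n+1)) ∅) n
  have hV0 : V 0 = sF p (O 0) ∅ := rfl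
  have hVs : ∀ n, V (n+1) = sF p (V n ∩ O (n+1)) ∅ := fun n => rfl
  have hmain : ∀ n, IsOpen (V n) ∧ p ∈ V n ∧ closure (V n) ⊆ O n := by
    intro n
    induction n with
    | zero =>
      obtain ⟨s1, s2, s3⟩ := sF_spec p (hOo 0) (mem_iInter.1 hpG 0) hpe
      exact ⟨s1, s2, (hV0 ▸ s3 : closure (V 0) ⊆ _).trans diff_subset⟩
    | succ n ih =>
      obtain ⟨s1, s2, s3⟩ := sF_spec p (ih.1.inter (hOo (n+1)))
        (⟨ih.2.1, mem_iInter.1 hpG (n+1)⟩ : p ∈ V n ∩ O (n+1)) hpe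
      refine ⟨s1, s2, ?_⟩
      rw [hVs n]
      exact s3.trans (diff_subset.trans inter_subset_right)
  have hnest : ∀ n, closure (V (n+1)) ⊆ V n := by
    intro n
    obtain ⟨s1, s2, s3⟩ := sF_spec p ((hmain n).1.inter (hOo (n+1)))
      (⟨(hmain n).2.1, mem_iInter.1 hpG (n+1)⟩ : p ∈ V n ∩ O (n+1)) hpe
    rw [hVs n]
    exact s3.trans (diff_subset.trans inter_subset_left)
  refine ⟨V, fun n => (hmain n).1, fun n => (hmain n).2.1, hnest, ?_⟩
  intro y hy
  apply mem_iInter.2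
  intro n
  exact (hmain n).2.2 (subset_closure (mem_iInter.1 hy n))

end Aux

lemma mem_closure_iff' {Y : Type u} (t : TopologicalSpace Y) (S : Set Y) (q : Y) :
    q ∈ @closure Y t S ↔ ∀ o, t.IsOpen o → q ∈ o → (o ∩ S).Nonempty := by
  letI := t; exact mem_closure_iff

/-- if a regular space `X` is `Cl_κ`-Lindelöf then the tightness of its
`G_δ`-modification is at most `2^κ`. -/
theorem statement3 {X : Type u} [tX : TopologicalSpace X] [T3Space X]
    (κ : Cardinal.{u}) (hκ : ℵ₀ ≤ κ) (h : ClLindelofOf tX κ)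
    (A : Set X) (p : X) (hp : p ∈ @closure X (gDelta tX) A) :
    ∃ W ⊆ A, #↥W ≤ 2 ^ κ ∧ p ∈ @closure X (gDelta tX) W := by
  refine ⟨Wfin κ p A, Wfin_subset_A κ p A, mk_Wfin_le κ p A hκ, ?_⟩
  refine (mem_closure_iff' (gDelta tX) _ p).2 ?_
  intro B hB hpB
  by_contra hnon
  have hBW : B ∩ Wfin κ p A = ∅ := not_nonempty_iff_eq_empty.1 hnon
  obtain ⟨G₀, hG₀, hpG₀, hG₀B⟩ := gdelta_nbhd hB p hpB
  obtain ⟨V, hVo, hVp, hVc, hVG⟩ := seq_of_gdelta p hG₀ hpG₀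
  have hGW : (⋂ n, V n) ∩ Wfin κ p A = ∅ := by
    rw [eq_empty_iff_forall_notMem]
    rintro a ⟨h1, h2⟩
    rw [eq_empty_iff_forall_notMem] at hBW
    exact hBW a ⟨hG₀B (hVG h1), h2⟩
  obtain ⟨g, hgo, hgp, hgA⟩ := machine κ p A hκ h V hVo hVp hVc hGW
  have hGδ : IsGδ (⋂ n, g n) := IsGδ.iInter_of_isOpen hgo
  have hδopen : (gDelta tX).IsOpen (⋂ n, g n) :=
    TopologicalSpace.isOpen_generateFrom_of_mem hGδ
  have hne := (mem_closure_iff' (gDelta tX) A p).1 hp _ hδopen hgp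
  rw [hgA] at hne
  exact Set.not_nonempty_empty hne
end

section
/- Let κ be an uncountable cardinal, X = Σ(2^κ) the Σ-product of κ copies of 2 (points with countable support), p ∈ 2^κ the constant-one function, and Y = X ∪ {p} with the subspace topology from 2^κ. Then in the G_δ-modification Y_δ of Y, the point p lies in the closure of X, but for every subset W ⊆ X with |W| < κ, p does not lie in the closure of W in Y_δ. Hence t(Y_δ) ≥ κ. -/
open Cardinal Set Topology

universe u

/-- The Σ-product of `ι`-many copies of `Bool` together with the constant-`true`
function, as a set of the product `ι → Bool`. -/
def YSet (ι : Type u) : Set (ι → Bool) :=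
  {x | (x ⁻¹' {true}).Countable ∨ x = fun _ => true}

/-- The constant-one point `p`. -/
def ptOne (ι : Type u) : ↥(YSet ι) := ⟨fun _ => true, Or.inr rfl⟩

/-- The Σ-product part `X = Σ(2^ι)` inside `Y`. -/
def sigmaPart (ι : Type u) : Set ↥(YSet ι) := {y | (y.1 ⁻¹' {true}).Countable}


section Aux

open TopologicalSpace

variable {ι : Type u}

/-- Every `Gδ` subset of `Y` containing `p` meets the Σ-product part. -/
lemma gdelta_meets_sigma {G : Set ↥(YSet ι)} (hG : IsGδ G) (hp : ptOne ι ∈ G) :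
    ∃ x ∈ G, x ∈ sigmaPart ι := by
  obtain ⟨T, hTo, hTc, rfl⟩ := hG
  have key : ∀ t ∈ T, ∃ F : Finset ι,
      ∀ y : ↥(YSet ι), (∀ a ∈ F, y.1 a = true) → y ∈ t := by
    intro t ht
    obtain ⟨U, hU, hUt⟩ := isOpen_induced_iff.mp (hTo t ht)
    have hpU : (fun _ => true : ι → Bool) ∈ U := by
      have h2 := hp t ht
      rw [← hUt] at h2
      exact h2
    obtain ⟨I, u, hIu, hsub⟩ := isOpen_pi_iff.mp hU _ hpU
    refine ⟨I, fun y hy => ?_⟩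
    rw [← hUt]
    apply hsub
    intro a ha
    have := (hIu a ha).2
    simpa [hy a ha] using this
  choose F hF using key
  classical
  set S : Set ι := ⋃ t : ↥T, ↑(F t.1 t.2) with hS
  have hSc : S.Countable := by
    have : Countable ↥T := hTc.to_subtype
    exact Set.countable_iUnion fun t => (F t.1 t.2).countable_toSet
  set x : ι → Bool := fun a => if a ∈ S then true else false with hx
  have hxpre : x ⁻¹' {true} = S := by
    ext a
    by_cases h : a ∈ S <;> simp [hx, h]
  have hxY : x ∈ YSet ι := Or.inl (by rw [hxpre]; exact hSc)
  refine ⟨⟨x, hxY⟩, ?_, ?_⟩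
  · intro t ht
    apply hF t ht
    intro a ha
    have haS : a ∈ S := Set.mem_iUnion.mpr ⟨⟨t, ht⟩, ha⟩
    simp [hx, haS]
  · show (x ⁻¹' {true}).Countable
    rw [hxpre]; exact hSc

/-- In the `Gδ`-modification, every open set is a union of `Gδ` sets. -/
lemma gdelta_open_basis {X : Type u} {t : TopologicalSpace X} {O : Set X}
    (hO : GenerateOpen {s : Set X | @IsGδ X t s} O) :
    ∀ q ∈ O, ∃ G, @IsGδ X t G ∧ q ∈ G ∧ G ⊆ O := by
  induction hO with
  | basic s hs => exact fun q hq => ⟨s, hs, hq, subset_rfl⟩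
  | univ => exact fun q _ => ⟨Set.univ, IsGδ.univ, trivial, subset_rfl⟩
  | inter s u hs hu ihs ihu =>
    intro q hq
    obtain ⟨G1, h1, h2, h3⟩ := ihs q hq.1
    obtain ⟨G2, h1', h2', h3'⟩ := ihu q hq.2
    exact ⟨G1 ∩ G2, h1.inter h1', ⟨h2, h2'⟩,
      Set.inter_subset_inter h3 h3'⟩
  | sUnion S hS ih =>
    rintro q ⟨s, hsS, hqs⟩
    obtain ⟨G, h1, h2, h3⟩ := ih s hsS q hqs
    exact ⟨G, h1, h2, h3.trans (Set.subset_sUnion_of_mem hsS)⟩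


lemma part1_closure {ι : Type u} :
    ptOne ι ∈ @closure _ (gDelta (inferInstance : TopologicalSpace ↥(YSet ι)))
      (sigmaPart ι) := by
  rw [@mem_closure_iff _ (gDelta (inferInstance : TopologicalSpace ↥(YSet ι)))]
  intro o ho hpo
  obtain ⟨G, hGd, hpG, hGo⟩ := gdelta_open_basis ho _ hpo
  obtain ⟨x, hxG, hxSig⟩ := gdelta_meets_sigma hGd hpG
  exact ⟨x, hGo hxG, hxSig⟩

lemma part2_not_closure {ι : Type u} (hι : ℵ₀ < #ι) :
    ∀ W ⊆ sigmaPart ι, #↥W < #ι →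
      ptOne ι ∉ @closure _ (gDelta (inferInstance : TopologicalSpace ↥(YSet ι))) W := by
  intro W hWSig hWcard hmem
  classical
  set S : Set ι := ⋃ w : ↥W, ((w.1 : ↥(YSet ι)).1 ⁻¹' {true}) with hSdef
  have hfib : ∀ w : ↥W, #↥((w.1 : ↥(YSet ι)).1 ⁻¹' {true}) ≤ ℵ₀ := by
    intro w
    have h1 : ((w.1 : ↥(YSet ι)).1 ⁻¹' {true}).Countable := hWSig w.2
    have := h1.to_subtype
    exact Cardinal.mk_le_aleph0
  have hScard : #↥S < #ι := by
    calc #↥S ≤ #↥W * ⨆ w : ↥W, #↥((w.1 : ↥(YSet ι)).1 ⁻¹' {true}) :=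
          Cardinal.mk_iUnion_le _
      _ ≤ #↥W * ℵ₀ := mul_le_mul_right (ciSup_le' hfib) _
      _ ≤ #↥W ⊔ ℵ₀ ⊔ ℵ₀ := Cardinal.mul_le_max _ _
      _ < #ι := max_lt (max_lt hWcard hι) hι
  have hSne : ∃ a : ι, a ∉ S := by
    by_contra h
    push_neg at h
    have heq : S = Set.univ := Set.eq_univ_iff_forall.mpr h
    rw [heq, Cardinal.mk_univ] at hScard
    exact lt_irrefl _ hScard
  obtain ⟨a, haS⟩ := hSne
  set O : Set ↥(YSet ι) := {y | y.1 a = true} with hOdef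
  have hOopen : IsOpen O := by
    have hc : Continuous (fun y : ↥(YSet ι) => y.1 a) :=
      (continuous_apply a).comp continuous_subtype_val
    exact (isOpen_discrete {true}).preimage hc
  have hOτ : @IsOpen _ (gDelta (inferInstance : TopologicalSpace ↥(YSet ι))) O :=
    TopologicalSpace.GenerateOpen.basic O
      (show O ∈ {s : Set ↥(YSet ι) | IsGδ s} from hOopen.isGδ)
  have hWO : W ⊆ Oᶜ := by
    intro w hw hwO
    exact haS (Set.mem_iUnion.mpr ⟨⟨w, hw⟩, hwO⟩)
  have hcl : @closure _ (gDelta (inferInstance : TopologicalSpace ↥(YSet ι))) W ⊆ Oᶜ :=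
    @closure_minimal _ (gDelta (inferInstance : TopologicalSpace ↥(YSet ι))) _ _ hWO
      (@IsOpen.isClosed_compl _ (gDelta (inferInstance : TopologicalSpace ↥(YSet ι))) _ hOτ)
  exact hcl hmem rfl

end Aux

/-- in the `G_δ`-modification of `Y = Σ(2^κ) ∪ {p}`, the point `p` is in
the closure of `Σ(2^κ)` but not in the closure of any subset of it of size `< κ`; hence
`t(Y_δ) ≥ κ`. -/
theorem statement7 {ι : Type u} (hι : ℵ₀ < #ι) :
    ptOne ι ∈ @closure _ (gDelta (inferInstance : TopologicalSpace ↥(YSet ι)))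
        (sigmaPart ι) ∧
      (∀ W ⊆ sigmaPart ι, #↥W < #ι →
        ptOne ι ∉ @closure _ (gDelta (inferInstance : TopologicalSpace ↥(YSet ι))) W) ∧
      #ι ≤ tightnessOf (gDelta (inferInstance : TopologicalSpace ↥(YSet ι))) := by
  refine ⟨part1_closure, part2_not_closure hι, ?_⟩
  have hne : (ℵ₀ ⊔ #↥(YSet ι)) ∈ {κ : Cardinal.{u} | ℵ₀ ≤ κ ∧
      ∀ (A : Set ↥(YSet ι)) (p : ↥(YSet ι)),
        p ∈ @closure _ (gDelta (inferInstance : TopologicalSpace ↥(YSet ι))) A →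
      ∃ B ⊆ A, #↥B ≤ κ ∧
        p ∈ @closure _ (gDelta (inferInstance : TopologicalSpace ↥(YSet ι))) B} := by
    refine ⟨le_sup_left, fun A p hp => ⟨A, subset_rfl, ?_, hp⟩⟩
    exact le_trans (Cardinal.mk_subtype_le _) le_sup_right
  refine le_csInf ⟨_, hne⟩ ?_
  rintro κ ⟨hκ0, hκ⟩
  by_contra h
  push_neg at h
  obtain ⟨B, hBA, hBκ, hpB⟩ := hκ (sigmaPart ι) (ptOne ι) part1_closure
  exact part2_not_closure hι B hBA (lt_of_le_of_lt hBκ h) hpB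
end

section
/- For every topological space X, the supremum F(X) of cardinalities of free sequences in X satisfies F(X) ≤ L(X)·t(X), where L(X) is the Lindelöf number and t(X) the tightness of X. -/
open Cardinal Set Topology

universe u

/-- restriction of a free sequence -/
theorem IsFreeSeqOn.restrict {X : Type u} {t : TopologicalSpace X} {o o' : Ordinal.{u}}
    (h : o' ≤ o) {x : {α : Ordinal.{u} // α < o} → X} (hx : IsFreeSeqOn t o x) :
    IsFreeSeqOn t o' (fun i => x ⟨i.1, lt_of_lt_of_le i.2 h⟩) := by
  intro i
  have key := hx ⟨i.1, lt_of_lt_of_le i.2 h⟩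
  apply Set.eq_empty_of_subset_empty
  rw [← key]
  apply Set.inter_subset_inter
  · apply closure_mono
    rintro _ ⟨j, hj, rfl⟩
    exact ⟨⟨j.1, lt_of_lt_of_le j.2 h⟩, hj, rfl⟩
  · apply closure_mono
    rintro _ ⟨j, hj, rfl⟩
    exact ⟨⟨j.1, lt_of_lt_of_le j.2 h⟩, hj, rfl⟩

/-- `F(X) ≤ L(X) · t(X)` for every topological space `X`. -/
theorem statement9 {X : Type u} [tX : TopologicalSpace X] :
    freeNumberOf tX ≤ lindelofNumberOf tX * tightnessOf tX := by
  set L := lindelofNumberOf tX with hLdef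
  set T := tightnessOf tX with hTdef
  -- membership facts
  have hLmem : L ∈ {κ : Cardinal.{u} | ℵ₀ ≤ κ ∧ ∀ 𝒰 : Set (Set X), (∀ U ∈ 𝒰, IsOpen U) →
      ⋃₀ 𝒰 = Set.univ → ∃ 𝒱 ⊆ 𝒰, #↥𝒱 ≤ κ ∧ ⋃₀ 𝒱 = Set.univ} := by
    rw [hLdef, lindelofNumberOf]
    refine csInf_mem ⟨max (#(Set X)) ℵ₀, le_max_right _ _, ?_⟩
    intro 𝒰 _ hcov
    exact ⟨𝒰, Set.Subset.rfl, le_max_of_le_left (Cardinal.mk_set_le 𝒰), hcov⟩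
  have hTmem : T ∈ {κ : Cardinal.{u} | ℵ₀ ≤ κ ∧ ∀ (A : Set X) (p : X), p ∈ closure A →
      ∃ B ⊆ A, #↥B ≤ κ ∧ p ∈ closure B} := by
    rw [hTdef, tightnessOf]
    refine csInf_mem ⟨max (#X) ℵ₀, le_max_right _ _, ?_⟩
    intro A p hp
    exact ⟨A, Set.Subset.rfl, le_max_of_le_left (Cardinal.mk_set_le A), hp⟩
  set κ := L * T with hκdef
  have hmul : κ = max L T := Cardinal.mul_eq_max hLmem.1 hTmem.1
  have hκinf : ℵ₀ ≤ κ := hmul ▸ le_max_of_le_left hLmem.1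
  have hLκ : L ≤ κ := hmul ▸ le_max_left _ _
  have hTκ : T ≤ κ := hmul ▸ le_max_right _ _
  rw [freeNumberOf, sup_le_iff]
  refine ⟨hκinf, csSup_le' ?_⟩
  rintro c ⟨x, hx⟩
  by_contra hc
  push_neg at hc
  -- let μ = κ⁺ ≤ c, restrict the free sequence to length μ.ord
  set μ := Order.succ κ with hμdef
  have hμc : μ ≤ c := Order.succ_le_of_lt hc
  have hμreg : μ.IsRegular := Cardinal.isRegular_succ hκinf
  have hμinf : ℵ₀ ≤ μ := hμreg.1
  have ho : μ.ord ≤ c.ord := Cardinal.ord_le_ord.2 hμc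
  set o := μ.ord with hodef
  set y : {α : Ordinal.{u} // α < o} → X := fun i => x ⟨i.1, lt_of_lt_of_le i.2 ho⟩ with hydef
  have hy : IsFreeSeqOn tX o y := hx.restrict ho
  have holim : Order.IsSuccLimit o := Cardinal.isSuccLimit_ord hμinf
  have hopos : (0 : Ordinal.{u}) < o := holim.bot_lt
  -- final-segment closures
  set F : {α : Ordinal.{u} // α < o} → Set X := fun β => closure (y '' {j | β ≤ j}) with hFdef
  have hFclosed : ∀ β, IsClosed (F β) := fun β => isClosed_closure
  have hmemF : ∀ β γ, β ≤ γ → y γ ∈ F β := by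
    intro β γ hβγ
    exact subset_closure ⟨γ, hβγ, rfl⟩
  -- Claim 1: every point avoids some F β
  have claim1 : ∀ p : X, ∃ β, p ∉ F β := by
    intro p
    by_contra hp
    push_neg at hp
    have hp0 : p ∈ closure (Set.range y) := by
      have := hp ⟨0, hopos⟩
      refine closure_mono ?_ this
      rintro _ ⟨j, _, rfl⟩; exact ⟨j, rfl⟩
    obtain ⟨B, hBsub, hBcard, hpB⟩ := hTmem.2 _ p hp0
    -- choose indices for points of B
    choose idx hidx using fun b : ↥B => (hBsub b.2 : b.1 ∈ Set.range y)
    have hcard : #↥B < o.cof := by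
      rw [hodef, hμreg.cof_eq]
      exact lt_of_le_of_lt (hBcard.trans hTκ) (Order.lt_succ κ)
    have hsup : (⨆ b : ↥B, (idx b).1) < o :=
      Ordinal.iSup_lt_ord hcard fun b => (idx b).2
    have hsucc : Order.succ (⨆ b : ↥B, (idx b).1) < o := holim.succ_lt hsup
    set γ : {α : Ordinal.{u} // α < o} := ⟨Order.succ (⨆ b : ↥B, (idx b).1), hsucc⟩ with hγdef
    have hBinit : B ⊆ y '' {j | j < γ} := by
      intro b hb
      refine ⟨idx ⟨b, hb⟩, ?_, hidx ⟨b, hb⟩⟩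
      show (idx ⟨b, hb⟩).1 < γ.1
      exact lt_of_le_of_lt (Ordinal.le_iSup (fun b : ↥B => (idx b).1) ⟨b, hb⟩) (Order.lt_succ _)
    have h1 : p ∈ closure (y '' {j | j < γ}) := closure_mono hBinit hpB
    have h2 : p ∈ F γ := hp γ
    have := hy γ
    exact absurd this (by
      intro h
      have : p ∈ (∅ : Set X) := h ▸ ⟨h1, h2⟩
      exact this)
  -- Claim 2: use Lindelöf on the cover by complements of F β
  set 𝒰 : Set (Set X) := Set.range (fun β => (F β)ᶜ) with h𝒰def
  have hopen : ∀ U ∈ 𝒰, IsOpen U := by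
    rintro _ ⟨β, rfl⟩; exact (hFclosed β).isOpen_compl
  have hcov : ⋃₀ 𝒰 = Set.univ := by
    apply Set.eq_univ_of_forall
    intro p
    obtain ⟨β, hβ⟩ := claim1 p
    exact ⟨(F β)ᶜ, Set.mem_range_self β, hβ⟩
  obtain ⟨𝒱, h𝒱sub, h𝒱card, h𝒱cov⟩ := hLmem.2 𝒰 hopen hcov
  choose g hg using fun V : ↥𝒱 => Set.mem_range.mp (h𝒱sub V.2)
  have hcard : #↥𝒱 < o.cof := by
    rw [hodef, hμreg.cof_eq]
    exact lt_of_le_of_lt (h𝒱card.trans hLκ) (Order.lt_succ κ)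
  have hsup : (⨆ V : ↥𝒱, (g V).1) < o :=
    Ordinal.iSup_lt_ord hcard fun V => (g V).2
  set γ : {α : Ordinal.{u} // α < o} := ⟨⨆ V : ↥𝒱, (g V).1, hsup⟩ with hγdef
  have : y γ ∈ ⋃₀ 𝒱 := h𝒱cov ▸ Set.mem_univ _
  obtain ⟨V, hV, hyV⟩ := this
  have hVeq : V = (F (g ⟨V, hV⟩))ᶜ := (hg ⟨V, hV⟩).symm
  have hle : g ⟨V, hV⟩ ≤ γ := by
    show (g ⟨V, hV⟩).1 ≤ γ.1
    exact Ordinal.le_iSup (fun V : ↥𝒱 => (g V).1) ⟨V, hV⟩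
  have : y γ ∈ F (g ⟨V, hV⟩) := hmemF _ _ hle
  rw [hVeq] at hyV
  exact hyV this
end

section
/- For every compact Hausdorff space X, the tightness of X equals the supremum of the cardinalities of free sequences in X: t(X) = F(X). -/
open Cardinal Set Topology

universe u

section ArhAux

variable {X : Type u} [tX : TopologicalSpace X]

/-- Cardinality of the range of a function indexed by ordinals below `α`. -/
lemma aCardRange {α : Ordinal.{u}} {κ : Cardinal.{u}} (h : α.card ≤ κ)
    (f : {β : Ordinal.{u} // β < α} → X) : #↥(range f) ≤ κ := by
  have h1 := mk_range_le_lift (f := f)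
  rw [show #{β : Ordinal.{u} // β < α} = #(Iio α) from rfl, Ordinal.mk_Iio_ordinal] at h1
  simp only [Cardinal.lift_lift] at h1
  calc #↥(range f) ≤ α.card := Cardinal.lift_le.1 h1
    _ ≤ κ := h

/-- A free sequence is injective, hence its length is at most `#X`. -/
lemma aFreeCardLe {c : Cardinal.{u}} (x : {β : Ordinal.{u} // β < c.ord} → X)
    (hx : IsFreeSeqOn tX c.ord x) : c ≤ #X := by
  have hinj : Function.Injective x := by
    intro i j hij
    by_contra hne
    rcases lt_or_gt_of_ne (fun h : i = j => hne h) with h | h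
    · have h1 : x i ∈ closure (x '' {k | k < j}) := subset_closure ⟨i, h, rfl⟩
      have h2 : x j ∈ closure (x '' {k | j ≤ k}) := subset_closure ⟨j, show j ≤ j from le_rfl, rfl⟩
      have := hx j
      rw [eq_empty_iff_forall_notMem] at this
      exact this (x i) ⟨h1, hij ▸ h2⟩
    · have h1 : x j ∈ closure (x '' {k | k < i}) := subset_closure ⟨j, h, rfl⟩
      have h2 : x i ∈ closure (x '' {k | i ≤ k}) := subset_closure ⟨i, show i ≤ i from le_rfl, rfl⟩
      have := hx i
      rw [eq_empty_iff_forall_notMem] at this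
      exact this (x j) ⟨h1, hij ▸ h2⟩
  have h1 : Cardinal.lift.{u} #{β : Ordinal.{u} // β < c.ord} ≤ Cardinal.lift.{u+1} #X :=
    Cardinal.lift_mk_le'.2 ⟨⟨x, hinj⟩⟩
  rw [show #{β : Ordinal.{u} // β < c.ord} = #(Iio c.ord) from rfl, Ordinal.mk_Iio_ordinal,
    Cardinal.card_ord] at h1
  simp only [Cardinal.lift_lift] at h1
  exact Cardinal.lift_le.1 h1

variable [CompactSpace X] [T2Space X]

/-- Separation of a point from a closed set by an open set with disjoint closure. -/
lemma aSep (p : X) (F : Set X) (hF : IsClosed F) (hp : p ∉ F) :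
    ∃ U : Set X, IsOpen U ∧ p ∈ U ∧ closure U ∩ F = ∅ := by
  obtain ⟨s, hs, hscl, hsub⟩ := exists_mem_nhds_isClosed_subset (hF.isOpen_compl.mem_nhds hp)
  refine ⟨interior s, isOpen_interior, mem_interior_iff_mem_nhds.2 hs, ?_⟩
  have h2 : closure (interior s) ⊆ s := closure_minimal interior_subset hscl
  rw [eq_empty_iff_forall_notMem]
  exact fun z hz => hsub (h2 hz.1) hz.2

/-- Easy direction: a free sequence of length `c.ord` forces `c ≤ t` whenever `t` has the
tightness covering property. -/
lemma aFreeLeTight {t c : Cardinal.{u}} (ht : ℵ₀ ≤ t)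
    (hT : ∀ (A : Set X) (q : X), q ∈ closure A → ∃ B ⊆ A, #↥B ≤ t ∧ q ∈ closure B)
    (x : {a : Ordinal.{u} // a < c.ord} → X) (hx : IsFreeSeqOn tX c.ord x) : c ≤ t := by
  by_contra hlt
  push_neg at hlt
  set μ : Cardinal.{u} := Order.succ t with hμ
  have hμinf : ℵ₀ ≤ μ := ht.trans (Order.le_succ t)
  have hreg : Cardinal.IsRegular μ := Cardinal.isRegular_succ ht
  have hμc : μ ≤ c := Order.succ_le_of_lt hlt
  have hord : μ.ord ≤ c.ord := Cardinal.ord_le_ord.2 hμc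
  set emb : {a : Ordinal.{u} // a < μ.ord} → {a : Ordinal.{u} // a < c.ord} :=
    fun i => ⟨i.1, i.2.trans_le hord⟩ with hemb
  set y : {a : Ordinal.{u} // a < μ.ord} → X := fun i => x (emb i) with hy
  have hlim : Order.IsSuccLimit μ.ord := Cardinal.isSuccLimit_ord hμinf
  have hne : Nonempty {a : Ordinal.{u} // a < μ.ord} := ⟨⟨0, hlim.pos⟩⟩
  -- freeness of y
  have hyfree : ∀ i : {a : Ordinal.{u} // a < μ.ord},
      closure (y '' {j | j < i}) ∩ closure (y '' {j | i ≤ j}) = ∅ := by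
    intro i
    have hinit : y '' {j | j < i} = x '' {j | j < emb i} := by
      ext w
      constructor
      · rintro ⟨j, hj, rfl⟩; exact ⟨emb j, hj, rfl⟩
      · rintro ⟨j', hj', rfl⟩
        have hj'v : j'.1 < i.1 := hj'
        exact ⟨⟨j'.1, hj'v.trans i.2⟩, hj'v, rfl⟩
    have htail : y '' {j | i ≤ j} ⊆ x '' {j | emb i ≤ j} := by
      rintro w ⟨j, hj, rfl⟩
      exact ⟨emb j, hj, rfl⟩
    have := hx (emb i)
    rw [eq_empty_iff_forall_notMem] at this ⊢
    intro w hw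
    exact this w ⟨hinit ▸ hw.1, closure_mono htail hw.2⟩
  -- cluster point of the tails
  obtain ⟨q, hq⟩ := IsCompact.nonempty_iInter_of_directed_nonempty_isCompact_isClosed
    (fun i => closure (y '' {j | i ≤ j}))
    (by
      intro i j
      rcases le_total i j with h | h
      · exact ⟨j, closure_mono (image_mono fun k hk => h.trans hk),
          closure_mono (image_mono fun k hk => hk)⟩
      · exact ⟨i, closure_mono (image_mono fun k hk => hk),
          closure_mono (image_mono fun k hk => h.trans hk)⟩)
    (fun i => ⟨y i, subset_closure ⟨i, show i ≤ i from le_rfl, rfl⟩⟩)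
    (fun i => isClosed_closure.isCompact)
    (fun i => isClosed_closure)
  rw [mem_iInter] at hq
  have hq0 : q ∈ closure (y '' Set.univ) := by
    have := hq ⟨0, hlim.pos⟩
    have huniv : {j | (⟨0, hlim.pos⟩ : {a : Ordinal.{u} // a < μ.ord}) ≤ j} = Set.univ := by
      ext j
      simp only [mem_setOf_eq, mem_univ, iff_true, Subtype.mk_le_mk]
      exact zero_le (a := j.1)
    rwa [huniv] at this
  obtain ⟨B, hBsub, hBcard, hqB⟩ := hT (y '' Set.univ) q hq0
  have hBidx : ∀ b : ↥B, ∃ i : {a : Ordinal.{u} // a < μ.ord}, y i = b.1 := by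
    intro b
    obtain ⟨i, _, hi⟩ := hBsub b.2
    exact ⟨i, hi⟩
  choose g hg using hBidx
  set f : ↥B → Ordinal.{u} := fun b => Order.succ (g b).1 with hf
  have hσ : iSup f < μ.ord := by
    apply Ordinal.iSup_lt_ord
    · rw [hreg.cof_eq]
      exact lt_of_le_of_lt hBcard (Order.lt_succ t)
    · intro b
      exact hlim.succ_lt (g b).2
  set istar : {a : Ordinal.{u} // a < μ.ord} := ⟨iSup f, hσ⟩ with histar
  have hBinit : B ⊆ y '' {j | j < istar} := by
    intro b hb
    refine ⟨g ⟨b, hb⟩, ?_, hg ⟨b, hb⟩⟩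
    have h1 : (g ⟨b, hb⟩).1 < f ⟨b, hb⟩ := Order.lt_succ _
    exact lt_of_lt_of_le h1 (Ordinal.le_iSup f ⟨b, hb⟩)
  have h1 : q ∈ closure (y '' {j | j < istar}) := closure_mono hBinit |>.trans le_rfl hqB
  have h2 : q ∈ closure (y '' {j | istar ≤ j}) := hq istar
  have := hyfree istar
  rw [eq_empty_iff_forall_notMem] at this
  exact this q ⟨h1, h2⟩

variable (C : Set X) (p : X)

/-- The condition required of the pair (point, open set) chosen at each stage. -/
def AGoodPair (K D : Set X) (q : X × Set X) : Prop :=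
  IsOpen q.2 ∧ p ∈ q.2 ∧ closure q.2 ∩ closure D = ∅ ∧ q.1 ∈ C ∩ K ∩ q.2

open scoped Classical in
/-- The transfinite construction of a free sequence (with witnessing open sets). -/
noncomputable def afs : Ordinal.{u} → X × Set X :=
  Ordinal.lt_wf.fix fun α g =>
    if h : ∃ q : X × Set X, AGoodPair C p
        (closure C ∩ ⋂ β, ⋂ h : β < α, closure (g β h).2)
        {z | ∃ β, ∃ hh : β < α, (g β hh).1 = z} q
    then h.choose else (p, ∅)

/-- The compact set at stage `α`. -/
def aK (α : Ordinal.{u}) : Set X :=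
  closure C ∩ ⋂ β, ⋂ _h : β < α, closure (afs C p β).2

/-- The set of points chosen before stage `α`. -/
def aD (α : Ordinal.{u}) : Set X := {z | ∃ β, ∃ _h : β < α, (afs C p β).1 = z}

lemma afs_spec {α : Ordinal.{u}}
    (h : ∃ q, AGoodPair C p (aK C p α) (aD C p α) q) :
    AGoodPair C p (aK C p α) (aD C p α) (afs C p α) := by
  have e : afs C p α = _ := WellFounded.fix_eq _ _ α
  rw [e]
  split
  · next h' => exact h'.choose_spec
  · next h' => exact absurd h h'

/-- Membership in the closure of the stage-`i` open set, for points at later stages. -/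
lemma aMemClU {i j : Ordinal.{u}} (hij : i ≤ j) {q : X} (hq1 : q ∈ (afs C p j).2)
    (hq2 : q ∈ aK C p j) : q ∈ closure (afs C p i).2 := by
  rcases eq_or_lt_of_le hij with rfl | h
  · exact subset_closure hq1
  · exact mem_iInter.1 (mem_iInter.1 hq2.2 i) h

/-- The main invariant: at every stage of cardinality at most `κ`, the point `p` is in
the closure of `C ∩ aK α`, and the stage-`α` choice satisfies the spec. -/
lemma aMain {κ : Cardinal.{u}} (hκ : ℵ₀ ≤ κ)
    (hCc : ∀ D : Set X, D ⊆ C → #↥D ≤ κ → closure D ⊆ C)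
    (hpc : p ∈ closure C) (hpn : p ∉ C) :
    ∀ α : Ordinal.{u}, α.card ≤ κ →
      p ∈ closure (C ∩ aK C p α) ∧ AGoodPair C p (aK C p α) (aD C p α) (afs C p α) := by
  intro α
  induction α using Ordinal.induction with
  | h α IH =>
  intro hcard
  have IH' : ∀ β, β < α → p ∈ closure (C ∩ aK C p β) ∧
      AGoodPair C p (aK C p β) (aD C p β) (afs C p β) :=
    fun β hβ => IH β hβ (le_trans (Ordinal.card_le_card hβ.le) hcard)
  have hPα : p ∈ closure (C ∩ aK C p α) := by
    rcases eq_or_ne α 0 with rfl | hα0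
    · have hsub : C ⊆ C ∩ aK C p 0 := by
        intro c hc
        refine ⟨hc, subset_closure hc, ?_⟩
        simp [not_lt_zero]
      exact closure_mono hsub hpc
    · rw [mem_closure_iff]
      intro V hV hpV
      obtain ⟨s, hs, hscl, hsub⟩ := exists_mem_nhds_isClosed_subset (hV.mem_nhds hpV)
      have hpV' : p ∈ interior s := mem_interior_iff_mem_nhds.2 hs
      have hclV' : closure (interior s) ⊆ V := (closure_minimal interior_subset hscl).trans hsub
      have hch : ∀ i : {β : Ordinal.{u} // β < α}, ∃ z,
          z ∈ (interior s ∩ (afs C p i.1).2) ∩ (C ∩ aK C p i.1) := by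
        intro i
        have hPi := (IH' i.1 i.2).1
        have hUi := (IH' i.1 i.2).2
        exact mem_closure_iff.1 hPi _ (isOpen_interior.inter hUi.1) ⟨hpV', hUi.2.1⟩
      choose c hc using hch
      have hne : Nonempty {β : Ordinal.{u} // β < α} :=
        ⟨⟨0, pos_iff_ne_zero.2 hα0⟩⟩
      obtain ⟨z, hz⟩ := IsCompact.nonempty_iInter_of_directed_nonempty_isCompact_isClosed
        (fun i : {β : Ordinal.{u} // β < α} => closure (c '' {j | i ≤ j}))
        (by
          intro i j
          rcases le_total i j with h | h
          · exact ⟨j, closure_mono (image_mono fun k hk => h.trans hk),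
              closure_mono (image_mono fun k hk => hk)⟩
          · exact ⟨i, closure_mono (image_mono fun k hk => hk),
              closure_mono (image_mono fun k hk => h.trans hk)⟩)
        (fun i => ⟨c i, subset_closure ⟨i, show i ≤ i from le_rfl, rfl⟩⟩)
        (fun i => isClosed_closure.isCompact)
        (fun i => isClosed_closure)
      rw [mem_iInter] at hz
      have hzC : z ∈ C := by
        have h1 : closure (range c) ⊆ C := by
          refine hCc _ (fun w hw => ?_) (aCardRange hcard c)
          obtain ⟨i, rfl⟩ := hw
          exact (hc i).2.1
        refine h1 (closure_mono (image_subset_range _ _) (hz hne.some))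
      have hzK : z ∈ aK C p α := by
        refine ⟨subset_closure hzC, ?_⟩
        rw [mem_iInter]
        intro β
        rw [mem_iInter]
        intro hβ
        have htail : c '' {j | (⟨β, hβ⟩ : {β : Ordinal.{u} // β < α}) ≤ j} ⊆
            closure (afs C p β).2 := by
          rintro w ⟨j, hj, rfl⟩
          exact aMemClU C p (hj : β ≤ j.1) (hc j).1.2 (hc j).2.2
        exact closure_minimal htail isClosed_closure (hz ⟨β, hβ⟩)
      have hzV : z ∈ V := by
        have h2 : c '' {j | hne.some ≤ j} ⊆ interior s := fun w hw => by
          obtain ⟨j, _, rfl⟩ := hw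
          exact (hc j).1.1
        exact hclV' (closure_mono h2 (hz hne.some))
      exact ⟨z, hzV, hzC, hzK⟩
  have hDsub : aD C p α ⊆ C := by
    rintro w ⟨β, hβ, rfl⟩
    exact ((IH' β hβ).2.2.2.2).1.1
  have hDcard : #↥(aD C p α) ≤ κ := by
    have he : aD C p α = range (fun i : {β : Ordinal.{u} // β < α} => (afs C p i.1).1) := by
      ext w
      constructor
      · rintro ⟨β, hβ, rfl⟩; exact ⟨⟨β, hβ⟩, rfl⟩
      · rintro ⟨i, rfl⟩; exact ⟨i.1, i.2, rfl⟩
    rw [he]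
    exact aCardRange hcard _
  have hpD : p ∉ closure (aD C p α) := fun h => hpn (hCc _ hDsub hDcard h)
  obtain ⟨U, hU, hpU, hUD⟩ := aSep p (closure (aD C p α)) isClosed_closure hpD
  obtain ⟨w, hwU, hwCK⟩ := mem_closure_iff.1 hPα U hU hpU
  exact ⟨hPα, afs_spec C p ⟨(w, U), hU, hpU, hUD, ⟨hwCK.1, hwCK.2⟩, hwU⟩⟩

/-- From a failure of `κ`-tightness at `(C, p)` one obtains a free sequence of
length `(κ⁺).ord`. -/
lemma aFreeSeq {κ : Cardinal.{u}} (hκ : ℵ₀ ≤ κ)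
    (hCc : ∀ D : Set X, D ⊆ C → #↥D ≤ κ → closure D ⊆ C)
    (hpc : p ∈ closure C) (hpn : p ∉ C) :
    ∃ x : {a : Ordinal.{u} // a < (Order.succ κ).ord} → X,
      IsFreeSeqOn tX (Order.succ κ).ord x := by
  refine ⟨fun i => (afs C p i.1).1, ?_⟩
  intro i
  have hcard : ∀ a : Ordinal.{u}, a < (Order.succ κ).ord → a.card ≤ κ := fun a ha =>
    Order.lt_succ_iff.1 (Cardinal.lt_ord.1 ha)
  have hspec : ∀ a : {b : Ordinal.{u} // b < (Order.succ κ).ord},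
      AGoodPair C p (aK C p a.1) (aD C p a.1) (afs C p a.1) :=
    fun a => (aMain C p hκ hCc hpc hpn a.1 (hcard a.1 a.2)).2
  have hinit : (fun i : {a : Ordinal.{u} // a < (Order.succ κ).ord} => (afs C p i.1).1) ''
      {j | j < i} = aD C p i.1 := by
    ext w
    constructor
    · rintro ⟨j, hj, rfl⟩
      exact ⟨j.1, (hj : j.1 < i.1), rfl⟩
    · rintro ⟨β, hβ, rfl⟩
      exact ⟨⟨β, hβ.trans i.2⟩, hβ, rfl⟩
  have htail : (fun i : {a : Ordinal.{u} // a < (Order.succ κ).ord} => (afs C p i.1).1) ''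
      {j | i ≤ j} ⊆ closure (afs C p i.1).2 := by
    rintro w ⟨j, hj, rfl⟩
    exact aMemClU C p (hj : i.1 ≤ j.1) ((hspec j).2.2.2).2 ((hspec j).2.2.2).1.2
  have hfree := (hspec i).2.2.1
  rw [eq_empty_iff_forall_notMem] at hfree ⊢
  intro w hw
  exact hfree w ⟨closure_minimal htail isClosed_closure hw.2, hinit ▸ hw.1⟩

end ArhAux

/-- `t(X) = F(X)` for every compact Hausdorff space `X`. -/
theorem statement10 {X : Type u} [tX : TopologicalSpace X] [CompactSpace X] [T2Space X] :
    tightnessOf tX = freeNumberOf tX := by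
  classical
  set T : Set Cardinal.{u} := {κ | ℵ₀ ≤ κ ∧ ∀ (A : Set X) (p : X), p ∈ closure A →
    ∃ B ⊆ A, #↥B ≤ κ ∧ p ∈ closure B} with hTdef
  set S : Set Cardinal.{u} := {c | ∃ x : {α : Ordinal.{u} // α < c.ord} → X,
    IsFreeSeqOn tX c.ord x} with hSdef
  have hTt : tightnessOf tX = sInf T := rfl
  have hFS : freeNumberOf tX = ℵ₀ ⊔ sSup S := rfl
  have hTne : T.Nonempty :=
    ⟨ℵ₀ ⊔ #X, le_sup_left, fun A p hp =>
      ⟨A, Subset.rfl, (Cardinal.mk_set_le A).trans le_sup_right, hp⟩⟩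
  have htmem : tightnessOf tX ∈ T := hTt ▸ csInf_mem hTne
  have ht0 : ℵ₀ ≤ tightnessOf tX := htmem.1
  have hS0 : (0 : Cardinal.{u}) ∈ S := by
    refine ⟨fun i => (not_lt_zero (a := i.1) (by simpa [Cardinal.ord_zero] using i.2)).elim,
      fun i => (not_lt_zero (a := i.1) (by simpa [Cardinal.ord_zero] using i.2)).elim⟩
  have hSbdd : BddAbove S := ⟨#X, fun c hc => by
    obtain ⟨x, hx⟩ := hc
    exact aFreeCardLe x hx⟩
  have hFt : freeNumberOf tX ≤ tightnessOf tX := by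
    rw [hFS]
    refine sup_le ht0 (csSup_le ⟨0, hS0⟩ ?_)
    rintro c ⟨x, hx⟩
    exact aFreeLeTight ht0 htmem.2 x hx
  have hF0 : ℵ₀ ≤ freeNumberOf tX := hFS ▸ le_sup_left
  have hFmem : freeNumberOf tX ∈ T := by
    refine ⟨hF0, ?_⟩
    intro A p hp
    by_contra hcon
    push_neg at hcon
    set C : Set X := {z | ∃ B : Set X, B ⊆ A ∧ #↥B ≤ freeNumberOf tX ∧ z ∈ closure B}
      with hCdef
    have hAC : A ⊆ C := fun a ha =>
      ⟨{a}, singleton_subset_iff.2 ha,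
        by simpa using Cardinal.one_le_aleph0.trans hF0, subset_closure rfl⟩
    have hpC : p ∉ C := by
      rintro ⟨B, h1, h2, h3⟩
      exact hcon B h1 h2 h3
    have hCc : ∀ D : Set X, D ⊆ C → #↥D ≤ freeNumberOf tX → closure D ⊆ C := by
      intro D hDC hDcard
      have hex : ∀ d : ↥D, ∃ B : Set X, B ⊆ A ∧ #↥B ≤ freeNumberOf tX ∧ d.1 ∈ closure B :=
        fun d => hDC d.2
      choose g hg1 hg2 hg3 using hex
      have hBuA : (⋃ d : ↥D, g d) ⊆ A := iUnion_subset fun d => hg1 d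
      have hBucard : #↥(⋃ d : ↥D, g d) ≤ freeNumberOf tX := by
        calc #↥(⋃ d : ↥D, g d) ≤ #↥D * ⨆ d : ↥D, #↥(g d) := Cardinal.mk_iUnion_le _
          _ ≤ freeNumberOf tX * freeNumberOf tX :=
            mul_le_mul' hDcard (ciSup_le' fun d => hg2 d)
          _ = freeNumberOf tX := Cardinal.mul_eq_self hF0
      intro z hz
      have hzB : z ∈ closure (⋃ d : ↥D, g d) := by
        refine closure_minimal ?_ isClosed_closure hz
        intro d hd
        exact closure_mono (subset_iUnion (fun d : ↥D => g d) ⟨d, hd⟩) (hg3 ⟨d, hd⟩)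
      exact ⟨⋃ d : ↥D, g d, hBuA, hBucard, hzB⟩
    have hpcC : p ∈ closure C := closure_mono hAC hp
    obtain ⟨x, hx⟩ := aFreeSeq C p hF0 hCc hpcC hpC
    have hmem : Order.succ (freeNumberOf tX) ∈ S := ⟨x, hx⟩
    have hle : Order.succ (freeNumberOf tX) ≤ freeNumberOf tX :=
      le_trans (le_csSup hSbdd hmem) (hFS ▸ le_sup_right)
    exact absurd hle (Order.lt_succ (freeNumberOf tX)).not_ge
  exact le_antisymm (hTt ▸ csInf_le (OrderBot.bddBelow T) hFmem) hFt
end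

section
/- If X is a regular (T3) space, then the tightness of the G_δ-modification of X is at most 2^{d(X)}, where d(X) is the density of X. -/
open Cardinal Set Topology

universe u

/-- The density of `X`: the least infinite cardinal `c` admitting a dense subset of
cardinality at most `c`. -/
noncomputable def densityOf (X : Type u) [TopologicalSpace X] : Cardinal.{u} :=
  sInf {c : Cardinal.{u} | ℵ₀ ≤ c ∧ ∃ D : Set X, Dense D ∧ #↥D ≤ c}

section Aux

variable {X : Type u} [tX : TopologicalSpace X]

lemma aux_genOpen_gdelta {O : Set X}
    (h : TopologicalSpace.GenerateOpen {s : Set X | IsGδ s} O) :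
    ∀ p ∈ O, ∃ S : Set X, IsGδ S ∧ p ∈ S ∧ S ⊆ O := by
  induction h with
  | basic S hS => exact fun p hp => ⟨S, hS, hp, subset_rfl⟩
  | univ => exact fun p _ => ⟨univ, IsGδ.univ, trivial, subset_rfl⟩
  | inter U V hU hV ihU ihV =>
      rintro p ⟨hpU, hpV⟩
      obtain ⟨S, hS, hpS, hSU⟩ := ihU p hpU
      obtain ⟨T, hT, hpT, hTV⟩ := ihV p hpV
      exact ⟨S ∩ T, hS.inter hT, ⟨hpS, hpT⟩, inter_subset_inter hSU hTV⟩
  | sUnion 𝒮 h𝒮 ih =>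
      rintro p ⟨U, hU, hpU⟩
      obtain ⟨S, hS, hpS, hSU⟩ := ih U hU p hpU
      exact ⟨S, hS, hpS, hSU.trans (subset_sUnion_of_mem hU)⟩

lemma aux_mem_gdelta_closure (p : X) (B : Set X) :
    p ∈ @closure X (TopologicalSpace.generateFrom {s : Set X | @IsGδ X tX s}) B ↔
      ∀ S : Set X, IsGδ S → p ∈ S → (S ∩ B).Nonempty := by
  rw [@mem_closure_iff]
  constructor
  · intro h S hS hpS
    exact h S (TopologicalSpace.GenerateOpen.basic S hS) hpS
  · intro h O hO hpO
    obtain ⟨S, hS, hpS, hSO⟩ := aux_genOpen_gdelta hO p hpO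
    obtain ⟨x, hx1, hx2⟩ := h S hS hpS
    exact ⟨x, hSO hx1, hx2⟩

lemma aux_reg_step [T3Space X] {D : Set X} (hD : Dense D)
    (a : X) (U : Set X) (hU : IsOpen U) (ha : a ∈ U) :
    ∃ s : Set ↥D, a ∈ interior (closure (Subtype.val '' s)) ∧
      interior (closure (Subtype.val '' s)) ⊆ U := by
  obtain ⟨t, htmem, htc, hts⟩ := exists_mem_nhds_isClosed_subset (hU.mem_nhds ha)
  have himg : Subtype.val '' {d : ↥D | (d : X) ∈ interior t} = interior t ∩ D := by
    ext x; simp [Set.mem_image, and_comm]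
  refine ⟨{d | (d : X) ∈ interior t}, ?_, ?_⟩
  · rw [himg]
    exact interior_maximal (hD.open_subset_closure_inter isOpen_interior)
      isOpen_interior (mem_interior_iff_mem_nhds.2 htmem)
  · rw [himg]
    calc interior (closure (interior t ∩ D)) ⊆ closure (interior t ∩ D) := interior_subset
      _ ⊆ closure t := closure_mono ((inter_subset_left).trans interior_subset)
      _ = t := htc.closure_eq
      _ ⊆ U := hts

lemma aux_gdelta_net [T3Space X] {D : Set X} (hD : Dense D)
    {S : Set X} (hS : IsGδ S) {a : X} (ha : a ∈ S) :
    ∃ f : ℕ → Set ↥D,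
      a ∈ ⋂ n, interior (closure (Subtype.val '' f n)) ∧
      (⋂ n, interior (closure (Subtype.val '' f n))) ⊆ S := by
  obtain ⟨g, hg, rfl⟩ := isGδ_iff_eq_iInter_nat.1 hS
  have h : ∀ n : ℕ, ∃ s : Set ↥D, a ∈ interior (closure (Subtype.val '' s)) ∧
      interior (closure (Subtype.val '' s)) ⊆ g n := fun n =>
    aux_reg_step hD a (g n) (hg n) (mem_iInter.1 ha n)
  choose f hf1 hf2 using h
  exact ⟨f, mem_iInter.2 hf1, iInter_mono hf2⟩

end Aux

/-- for regular `X`, `t(X_δ) ≤ 2^{d(X)}`. -/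
theorem statement11 {X : Type u} [tX : TopologicalSpace X] [T3Space X] :
    tightnessOf (gDelta tX) ≤ 2 ^ densityOf X := by
  have hdmem : densityOf X ∈
      {c : Cardinal.{u} | ℵ₀ ≤ c ∧ ∃ D : Set X, Dense D ∧ #↥D ≤ c} := by
    apply csInf_mem
    refine ⟨ℵ₀ ⊔ #X, le_sup_left, Set.univ, dense_univ, ?_⟩
    rw [Cardinal.mk_univ]
    exact le_sup_right
  obtain ⟨hℵ, D, hDdense, hDle⟩ := hdmem
  have hcard : #(ℕ → Set ↥D) ≤ 2 ^ densityOf X := by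
    rw [Cardinal.mk_arrow]
    simp only [Cardinal.mk_set, Cardinal.mk_nat, Cardinal.lift_aleph0, Cardinal.lift_id, Cardinal.lift_uzero]
    rw [← Cardinal.power_mul]
    apply Cardinal.power_le_power_left two_ne_zero
    calc #↥D * ℵ₀ ≤ densityOf X * densityOf X := mul_le_mul' hDle hℵ
      _ = densityOf X := Cardinal.mul_eq_self hℵ
  apply csInf_le'
  constructor
  · exact hℵ.trans (Cardinal.cantor _).le
  · intro A p hp
    -- the network points
    classical
    set N : (ℕ → Set ↥D) → Set X :=
      fun f => ⋂ n, interior (closure (Subtype.val '' f n)) with hN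
    set g : {f : ℕ → Set ↥D // (N f ∩ A).Nonempty} → X := fun f => f.2.choose with hg
    refine ⟨Set.range g, ?_, ?_, ?_⟩
    · rintro x ⟨f, rfl⟩
      exact f.2.choose_spec.2
    · exact (Cardinal.mk_range_le).trans ((Cardinal.mk_subtype_le _).trans hcard)
    · rw [show gDelta tX = TopologicalSpace.generateFrom {s : Set X | @IsGδ X tX s} from rfl,
        aux_mem_gdelta_closure]
      intro S hS hpS
      have hpA := (aux_mem_gdelta_closure p A).1 hp S hS hpS
      obtain ⟨a, haS, haA⟩ := hpA
      obtain ⟨f, haf, hfS⟩ := aux_gdelta_net hDdense hS haS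
      have hne : (N f ∩ A).Nonempty := ⟨a, haf, haA⟩
      refine ⟨g ⟨f, hne⟩, hfS hne.choose_spec.1, ⟨⟨f, hne⟩, rfl⟩⟩
end

section
/- If X is a regular (T3) space, then the tightness of the G_δ-modification of X is at most 2^{s(X)}, where s(X) is the spread of X (the supremum of cardinalities of discrete subspaces). -/
open Cardinal Set Topology

universe u

/-- The spread of `X`: the supremum of the cardinalities of discrete subspaces
(together with `ℵ₀`). -/
noncomputable def spreadOf (X : Type u) [TopologicalSpace X] : Cardinal.{u} :=
  ℵ₀ ⊔ sSup {c : Cardinal.{u} | ∃ D : Set X, DiscreteTopology ↥D ∧ #↥D = c}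


attribute [local instance] Classical.propDecidable

namespace ER

variable {I : Type u} {C : Type u} [LinearOrder I] [WellFoundedLT I]
variable {J : Type u} [LinearOrder J] [WellFoundedLT J]

/-- `y` is a valid continuation of the partial sequence `g` (below `ξ`) for target `a`. -/
def Valid (c : I → I → C) (a : I) {ξ : J} (g : ∀ ζ : J, ζ < ξ → I) (y : I) : Prop :=
  (∀ ζ (h : ζ < ξ), g ζ h ≠ y) ∧ ∀ ζ (h : ζ < ξ), c (g ζ h) y = c (g ζ h) a

noncomputable def greedy (c : I → I → C) (a : I) : J → I :=
  (IsWellFounded.wf (r := ((· < ·) : J → J → Prop))).fix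
    (C := fun _ => I)
    (fun ξ g =>
      if h : ∃ y, Valid c a (ξ := ξ) g y then
        (IsWellFounded.wf (r := ((· < ·) : I → I → Prop))).min {y | Valid c a (ξ := ξ) g y} h
      else a)

theorem greedy_eq (c : I → I → C) (a : I) (ξ : J) :
    greedy c a ξ =
      if h : ∃ y, Valid c a (fun ζ (_ : ζ < ξ) => greedy c a ζ) y then
        (IsWellFounded.wf (r := ((· < ·) : I → I → Prop))).min
          {y | Valid c a (fun ζ (_ : ζ < ξ) => greedy c a ζ) y} h
      else a := by
  exact WellFounded.fix_eq _ _ ξ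

/-- The sequence for `a` is stuck at stage `ξ`. -/
def Stuck (c : I → I → C) (a : I) (ξ : J) : Prop :=
  ¬ ∃ y, Valid c a (fun ζ (_ : ζ < ξ) => greedy c a ζ) y

theorem greedy_valid {c : I → I → C} {a : I} {ξ : J} (h : ¬ Stuck c a ξ) :
    Valid c a (fun ζ (_ : ζ < ξ) => greedy (J := J) c a ζ) (greedy c a ξ) := by
  rw [Stuck, not_not] at h
  have := greedy_eq (J := J) c a ξ
  rw [dif_pos h] at this
  rw [this]
  exact WellFounded.min_mem _ _ h


theorem greedy_ne {c : I → I → C} {a : I} {ξ ζ : J} (h : ¬ Stuck c a ξ) (hζ : ζ < ξ) :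
    greedy (J := J) c a ζ ≠ greedy c a ξ :=
  (greedy_valid h).1 ζ hζ

theorem greedy_trace {c : I → I → C} {a : I} {ξ ζ : J} (h : ¬ Stuck c a ξ) (hζ : ζ < ξ) :
    c (greedy (J := J) c a ζ) (greedy c a ξ) = c (greedy c a ζ) a :=
  (greedy_valid h).2 ζ hζ

theorem stuck_mem {c : I → I → C} {a : I} {ξ : J} (h : Stuck c a ξ) :
    ∃ ζ, ∃ _ : ζ < ξ, greedy (J := J) c a ζ = a := by
  by_contra hcon
  push_neg at hcon
  exact h ⟨a, fun ζ hζ => hcon ζ hζ, fun ζ hζ => rfl⟩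

theorem min_congr {α : Type u} {r : α → α → Prop} (wf : WellFounded r)
    (S T : Set α) (hS : S.Nonempty) (hT : T.Nonempty) (h : S = T) :
    wf.min S hS = wf.min T hT := by subst h; rfl

theorem greedy_congr {c : I → I → C} {a b : I} {δ : J}
    (hta : ∀ ζ, ζ < δ → ¬ Stuck c a ζ) (htb : ∀ ζ, ζ < δ → ¬ Stuck c b ζ)
    (htr : ∀ ζ, ζ < δ → c (greedy (J := J) c a ζ) a = c (greedy c b ζ) b) :
    ∀ ξ, ξ < δ → greedy (J := J) c a ξ = greedy c b ξ := by
  intro ξ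
  induction ξ using (IsWellFounded.wf (r := ((· < ·) : J → J → Prop))).induction with
  | _ ξ IH =>
    intro hξ
    have hSa : ¬ Stuck c a ξ := hta ξ hξ
    have hSb : ¬ Stuck c b ξ := htb ξ hξ
    have hg : ∀ ζ, ζ < ξ → greedy (J := J) c a ζ = greedy c b ζ :=
      fun ζ hζ => IH ζ hζ (hζ.trans hξ)
    have hset : {y | Valid c a (fun ζ (_ : ζ < ξ) => greedy c a ζ) y} =
        {y | Valid c b (fun ζ (_ : ζ < ξ) => greedy c b ζ) y} := by
      ext y
      constructor
      · rintro ⟨h1, h2⟩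
        constructor
        · intro ζ hζ
          have h1' : greedy (J := J) c a ζ ≠ y := h1 ζ hζ
          show greedy (J := J) c b ζ ≠ y
          rw [← hg ζ hζ]; exact h1'
        · intro ζ hζ
          have h2' : c (greedy (J := J) c a ζ) y = c (greedy c a ζ) a := h2 ζ hζ
          show c (greedy (J := J) c b ζ) y = c (greedy c b ζ) b
          rw [← hg ζ hζ, h2', htr ζ (hζ.trans hξ), hg ζ hζ]
      · rintro ⟨h1, h2⟩
        constructor
        · intro ζ hζ
          have h1' : greedy (J := J) c b ζ ≠ y := h1 ζ hζ
          show greedy (J := J) c a ζ ≠ y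
          rw [hg ζ hζ]; exact h1'
        · intro ζ hζ
          have h2' : c (greedy (J := J) c b ζ) y = c (greedy c b ζ) b := h2 ζ hζ
          show c (greedy (J := J) c a ζ) y = c (greedy c a ζ) a
          rw [hg ζ hζ, h2', ← htr ζ (hζ.trans hξ), hg ζ hζ]
    rw [Stuck, not_not] at hSa hSb
    have ea := greedy_eq (J := J) c a ξ
    have eb := greedy_eq (J := J) c b ξ
    rw [dif_pos hSa] at ea
    rw [dif_pos hSb] at eb
    rw [ea, eb]
    exact min_congr _ _ _ _ _ hset


theorem small_Iio (μ : Cardinal.{u}) (ξ : μ.ord.ToType) :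
    #{ζ : μ.ord.ToType // ζ < ξ} < μ :=
  Cardinal.mk_Iio_ord_toType ξ

theorem tripleSigma_inj {J C : Type u} [LT J] {x y : J}
    {f : {ζ : J // ζ < x} → C} {g : {ζ : J // ζ < y} → C}
    {px : {ζ : J // ζ < x}} {py : {ζ : J // ζ < y}}
    (h : (⟨x, f, px⟩ : Σ ξ : J, ({ζ : J // ζ < ξ} → C) × {ζ : J // ζ < ξ}) = ⟨y, g, py⟩) :
    ∃ h1 : x = y, (∀ (ζ : J) (hx : ζ < x) (hy : ζ < y), f ⟨ζ, hx⟩ = g ⟨ζ, hy⟩) ∧ px.1 = py.1 := by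
  injection h with h1 h2
  subst h1
  rw [heq_iff_eq] at h2
  obtain ⟨hf, hp⟩ := Prod.mk.inj h2
  exact ⟨rfl, fun ζ hx hy => by rw [hf], by rw [hp]⟩

theorem exists_unstuck {κ : Cardinal.{u}} (hκ : ℵ₀ ≤ κ) {C : Type u} (hC : #C ≤ κ)
    {I : Type u} [LinearOrder I] [WellFoundedLT I] (hI : Order.succ ((2 : Cardinal.{u}) ^ κ) ≤ #I)
    (c : I → I → C) :
    ∃ a : I, ∀ ξ : (Order.succ κ).ord.ToType, ¬ Stuck c a ξ := by
  by_contra hcon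
  push_neg at hcon
  set J := (Order.succ κ).ord.ToType with hJ
  have hwf : WellFounded ((· < ·) : J → J → Prop) := IsWellFounded.wf
  set δ : I → J := fun a => hwf.min {ξ | Stuck c a ξ} (hcon a) with hδ
  have hδstuck : ∀ a, Stuck c a (δ a) := fun a => hwf.min_mem _ (hcon a)
  have hδmin : ∀ a ζ, ζ < δ a → ¬ Stuck c a ζ := by
    intro a ζ hζ hst
    exact hwf.not_lt_min _ hst hζ
  have hpos : ∀ a : I, ∃ ζ : {ζ : J // ζ < δ a}, greedy (J := J) c a ζ.1 = a := by
    intro a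
    obtain ⟨ζ, hζ, h⟩ := stuck_mem (hδstuck a)
    exact ⟨⟨ζ, hζ⟩, h⟩
  classical
  set Φ : I → Σ ξ : J, ({ζ : J // ζ < ξ} → C) × {ζ : J // ζ < ξ} :=
    fun a => ⟨δ a, fun ζ => c (greedy (J := J) c a ζ.1) a, Classical.choose (hpos a)⟩ with hΦ
  have hinj : Function.Injective Φ := by
    intro a b h
    have h' : (⟨δ a, fun ζ => c (greedy (J := J) c a ζ.1) a, Classical.choose (hpos a)⟩ :
        Σ ξ : J, ({ζ : J // ζ < ξ} → C) × {ζ : J // ζ < ξ}) =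
        ⟨δ b, fun ζ => c (greedy (J := J) c b ζ.1) b, Classical.choose (hpos b)⟩ := h
    obtain ⟨h1, h2, h3⟩ := tripleSigma_inj h'
    have htr : ∀ ζ, ζ < δ a → c (greedy (J := J) c a ζ) a = c (greedy c b ζ) b := by
      intro ζ hζ
      exact h2 ζ hζ (h1 ▸ hζ)
    have hcongr := greedy_congr (δ := δ a) (hδmin a)
      (fun ζ hζ => hδmin b ζ (h1 ▸ hζ)) htr
    have ha := Classical.choose_spec (hpos a)
    have hb := Classical.choose_spec (hpos b)
    rw [← ha, ← hb, ← h3]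
    exact hcongr _ (Classical.choose (hpos a)).2
  have hcard : #(Σ ξ : J, ({ζ : J // ζ < ξ} → C) × {ζ : J // ζ < ξ}) ≤ 2 ^ κ := by
    rw [Cardinal.mk_sigma]
    have hterm : ∀ ξ : J, #(({ζ : J // ζ < ξ} → C) × {ζ : J // ζ < ξ}) ≤ 2 ^ κ := by
      intro ξ
      have hsm : #{ζ : J // ζ < ξ} ≤ κ := Order.lt_succ_iff.mp (small_Iio (Order.succ κ) ξ)
      have h1 : #({ζ : J // ζ < ξ} → C) ≤ 2 ^ κ := by
        rw [← Cardinal.power_def]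
        calc #C ^ #{ζ : J // ζ < ξ} ≤ κ ^ #{ζ : J // ζ < ξ} :=
              Cardinal.power_le_power_right hC
          _ ≤ κ ^ κ := Cardinal.power_le_power_left
              (by exact (Cardinal.aleph0_pos.trans_le hκ).ne') hsm
          _ = 2 ^ κ := Cardinal.power_self_eq hκ
      have h2 : #(({ζ : J // ζ < ξ} → C) × {ζ : J // ζ < ξ}) =
          #({ζ : J // ζ < ξ} → C) * #{ζ : J // ζ < ξ} := by
        rw [Cardinal.mk_prod, Cardinal.lift_id, Cardinal.lift_id]
      rw [h2]
      calc #({ζ : J // ζ < ξ} → C) * #{ζ : J // ζ < ξ} ≤ (2 ^ κ) * (2 ^ κ) :=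
            mul_le_mul' h1 (hsm.trans (Cardinal.cantor κ).le)
        _ = 2 ^ κ := Cardinal.mul_eq_self (hκ.trans (Cardinal.cantor κ).le)
    calc Cardinal.sum (fun ξ : J => #(({ζ : J // ζ < ξ} → C) × {ζ : J // ζ < ξ}))
        ≤ Cardinal.sum (fun _ : J => 2 ^ κ) := Cardinal.sum_le_sum _ _ hterm
      _ = #J * 2 ^ κ := Cardinal.sum_const' _ _
      _ ≤ (2 ^ κ) * (2 ^ κ) := by
          apply mul_le_mul' ?_ le_rfl
          rw [hJ, Cardinal.mk_toType, Cardinal.card_ord]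
          exact Order.succ_le_iff.mpr (Cardinal.cantor κ)
      _ = 2 ^ κ := Cardinal.mul_eq_self (hκ.trans (Cardinal.cantor κ).le)
  have hle : #I ≤ 2 ^ κ := (Cardinal.mk_le_of_injective hinj).trans hcard
  exact (Order.lt_succ ((2 : Cardinal.{u}) ^ κ)).not_ge (hI.trans hle)

/-- Erdős–Rado: a coloring of pairs from a set of size `(2^κ)⁺` with at most `κ` colors
has a homogeneous set of size `κ⁺`. -/
theorem exists_homogeneous {κ : Cardinal.{u}} (hκ : ℵ₀ ≤ κ) {C : Type u} (hC : #C ≤ κ)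
    {I : Type u} [LinearOrder I] [WellFoundedLT I]
    (hI : Order.succ ((2 : Cardinal.{u}) ^ κ) ≤ #I)
    (c : I → I → C) (hsym : ∀ a b, c a b = c b a) :
    ∃ (H : Set I) (col : C), Order.succ κ ≤ #↥H ∧
      ∀ i ∈ H, ∀ j ∈ H, j < i → c j i = col := by
  classical
  obtain ⟨a, ha⟩ := exists_unstuck hκ hC hI c
  set J := (Order.succ κ).ord.ToType with hJ
  set g : J → I := greedy c a with hg
  have hginj : Function.Injective g := by
    intro ζ ξ h
    rcases lt_trichotomy ζ ξ with hlt | he | hlt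
    · exact absurd h (greedy_ne (ha ξ) hlt)
    · exact he
    · exact absurd h.symm (greedy_ne (ha ζ) hlt)
  set t : J → C := fun ξ => c (g ξ) a with ht
  have hJcard : #J = Order.succ κ := by rw [hJ, Cardinal.mk_toType, Cardinal.card_ord]
  have hJne : Nonempty J := by
    rw [← Cardinal.mk_ne_zero_iff, hJcard]
    exact ((Order.lt_succ κ).trans_le' (zero_le : 0 ≤ κ)).ne'
  have hCne : Nonempty C := ⟨t (Classical.arbitrary J)⟩
  have hfib : ∃ col : C, Order.succ κ ≤ #↥(t ⁻¹' {col}) := by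
    by_contra hc
    push_neg at hc
    have hsmall : ∀ col : C, #↥(t ⁻¹' {col}) ≤ κ := fun col =>
      Order.lt_succ_iff.mp (hc col)
    have huniv : (Set.univ : Set J) = ⋃ col : C, t ⁻¹' {col} := by
      ext ξ; simp
    have : #J ≤ κ := by
      calc #J = #↥(Set.univ : Set J) := Cardinal.mk_univ.symm
        _ = #↥(⋃ col : C, t ⁻¹' {col}) := by rw [huniv]
        _ ≤ #C * ⨆ col : C, #↥(t ⁻¹' {col}) := Cardinal.mk_iUnion_le _
        _ ≤ κ * κ := by
            apply mul_le_mul' hC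
            exact ciSup_le' hsmall
        _ = κ := Cardinal.mul_eq_self hκ
    rw [hJcard] at this
    exact (Order.lt_succ κ).not_ge this
  obtain ⟨col, hcol⟩ := hfib
  refine ⟨g '' (t ⁻¹' {col}), col, ?_, ?_⟩
  · rw [Cardinal.mk_image_eq hginj]
    exact hcol
  · rintro i ⟨ξ, hξ, rfl⟩ j ⟨ζ, hζ, rfl⟩ hlt
    have hne : ζ ≠ ξ := fun h => (h ▸ hlt).false
    rcases lt_trichotomy ζ ξ with h | h | h
    · calc c (g ζ) (g ξ) = c (g ζ) a := greedy_trace (ha ξ) h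
        _ = t ζ := rfl
        _ = col := hζ
    · exact absurd h hne
    · calc c (g ζ) (g ξ) = c (g ξ) (g ζ) := hsym _ _
        _ = c (g ξ) a := greedy_trace (ha ζ) h
        _ = t ξ := rfl
        _ = col := hξ

end ER


namespace Statement12Aux

open TopologicalSpace

variable {X : Type u} [tX : TopologicalSpace X]

theorem gdelta_basic {O : Set X} (h : IsOpen[gDelta tX] O) {p : X} (hpO : p ∈ O) :
    ∃ G : Set X, IsGδ G ∧ p ∈ G ∧ G ⊆ O := by
  have h' : GenerateOpen {s : Set X | IsGδ s} O := h
  clear h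
  revert hpO
  induction h' with
  | basic s hs => exact fun hp => ⟨s, hs, hp, subset_rfl⟩
  | univ => exact fun _ => ⟨Set.univ, IsGδ.univ, trivial, subset_rfl⟩
  | inter s t _ _ IHs IHt =>
    intro hp
    obtain ⟨G1, h1, hp1, hs1⟩ := IHs hp.1
    obtain ⟨G2, h2, hp2, hs2⟩ := IHt hp.2
    exact ⟨G1 ∩ G2, h1.inter h2, ⟨hp1, hp2⟩, inter_subset_inter hs1 hs2⟩
  | sUnion S _ IH =>
    intro hp
    obtain ⟨s, hsS, hps⟩ := hp
    obtain ⟨G, hG, hpG, hsub⟩ := IH s hsS hps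
    exact ⟨G, hG, hpG, hsub.trans (subset_sUnion_of_mem hsS)⟩

theorem exists_V [T3Space X] {G : Set X} (hG : IsGδ G) {p : X} (hp : p ∈ G) :
    ∃ V : ℕ → Set X, (∀ n, IsOpen (V n)) ∧ (∀ n, p ∈ V n) ∧ (⋂ n, closure (V n)) ⊆ G := by
  obtain ⟨T, hTopen, hTct, rfl⟩ := hG
  have hne : (insert Set.univ T : Set (Set X)).Nonempty := ⟨Set.univ, mem_insert _ _⟩
  obtain ⟨U, hU⟩ := (hTct.insert Set.univ).exists_eq_range hne
  have hUopen : ∀ n, IsOpen (U n) := by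
    intro n
    have : U n ∈ insert Set.univ T := hU ▸ mem_range_self n
    rcases this with h | h
    · rw [h]; exact isOpen_univ
    · exact hTopen _ h
  have hpU : ∀ n, p ∈ U n := by
    intro n
    have : U n ∈ insert Set.univ T := hU ▸ mem_range_self n
    rcases this with h | h
    · rw [h]; trivial
    · exact hp _ h
  have hV : ∀ n : ℕ, ∃ V : Set X, IsOpen V ∧ p ∈ V ∧ closure V ⊆ U n := by
    intro n
    obtain ⟨W, hWnhds, hWclosed, hWsub⟩ :=
      exists_mem_nhds_isClosed_subset ((hUopen n).mem_nhds (hpU n))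
    exact ⟨interior W, isOpen_interior, mem_interior_iff_mem_nhds.mpr hWnhds,
      (closure_minimal interior_subset hWclosed).trans hWsub⟩
  choose V hVopen hpV hVsub using hV
  refine ⟨V, hVopen, hpV, ?_⟩
  intro x hx s hs
  have : s ∈ insert Set.univ T := mem_insert_of_mem _ hs
  rw [hU] at this
  obtain ⟨n, rfl⟩ := this
  exact hVsub n (mem_iInter.mp hx n)

/-- The property of a choice at one stage of the construction. -/
def StageProp (A : Set X) (B : Set X) (z : X × (ℕ → Set X)) : Prop :=
  (∀ n, IsOpen (z.2 n)) ∧ (∀ n, z.1 ∈ z.2 n) ∧ z.1 ∈ A ∧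
    ∀ b ∈ B, b ∉ ⋂ n, closure (z.2 n)

noncomputable def buildSeq (A : Set X) (μ : Cardinal.{u})
    {I : Type u} [LinearOrder I] [WellFoundedLT I]
    (h : ∀ B : Set X, ∃ z, B ⊆ A → #↥B ≤ μ → StageProp A B z) : I → X × (ℕ → Set X) :=
  (IsWellFounded.wf (r := ((· < ·) : I → I → Prop))).fix (C := fun _ => X × (ℕ → Set X))
    (fun i prev => Classical.choose (h (A ∩ {a | ∃ j, ∃ hj : j < i, (prev j hj).1 = a})))

theorem buildSeq_eq (A : Set X) (μ : Cardinal.{u})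
    {I : Type u} [LinearOrder I] [WellFoundedLT I]
    (h : ∀ B : Set X, ∃ z, B ⊆ A → #↥B ≤ μ → StageProp A B z) (i : I) :
    buildSeq A μ h i = Classical.choose
      (h (A ∩ {a | ∃ j, ∃ _ : j < i, (buildSeq A μ h j).1 = a})) :=
  WellFounded.fix_eq _ _ i

theorem buildSeq_spec (A : Set X) (μ : Cardinal.{u})
    {I : Type u} [LinearOrder I] [WellFoundedLT I]
    (h : ∀ B : Set X, ∃ z, B ⊆ A → #↥B ≤ μ → StageProp A B z)
    (hsmall : ∀ i : I, #{j : I // j < i} ≤ μ) (i : I) :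
    StageProp A (A ∩ {a | ∃ j, ∃ _ : j < i, (buildSeq A μ h j).1 = a}) (buildSeq A μ h i) := by
  rw [buildSeq_eq A μ h i]
  apply Classical.choose_spec
    (h (A ∩ {a | ∃ j, ∃ _ : j < i, (buildSeq A μ h j).1 = a})) inter_subset_left
  have hsub : A ∩ {a | ∃ j, ∃ _ : j < i, (buildSeq A μ h j).1 = a} ⊆
      range (fun j : {j : I // j < i} => (buildSeq A μ h j.1).1) := by
    rintro a ⟨_, j, hj, rfl⟩
    exact ⟨⟨j, hj⟩, rfl⟩
  exact (Cardinal.mk_le_mk_of_subset hsub).trans (Cardinal.mk_range_le.trans (hsmall i))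


theorem compl_closure_isOpen {Y : Type u} (t : TopologicalSpace Y) (B : Set Y) :
    IsOpen[t] (@closure Y t B)ᶜ := by
  letI := t
  exact isClosed_closure.isOpen_compl

theorem closure_inter_nonempty {Y : Type u} (t : TopologicalSpace Y) {A O : Set Y} {p : Y}
    (hp : p ∈ @closure Y t A) (hO : IsOpen[t] O) (hpO : p ∈ O) : (O ∩ A).Nonempty := by
  letI := t
  exact mem_closure_iff.mp hp O hO hpO

theorem subset_closure' {Y : Type u} (t : TopologicalSpace Y) (B : Set Y) :
    B ⊆ @closure Y t B := by
  letI := t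
  exact subset_closure

theorem discrete_of_isolated {D : Set X}
    (h : ∀ d ∈ D, ∃ U : Set X, IsOpen U ∧ U ∩ D = {d}) : DiscreteTopology ↥D := by
  rw [discreteTopology_iff_isOpen_singleton]
  intro a
  obtain ⟨U, hU, hUD⟩ := h a.1 a.2
  have heq : ({a} : Set ↥D) = Subtype.val ⁻¹' U := by
    ext y
    simp only [mem_singleton_iff, mem_preimage]
    constructor
    · rintro rfl
      have h1 : y.1 ∈ ({y.1} : Set X) := rfl
      rw [← hUD] at h1
      exact h1.1
    · intro hy
      have h1 : y.1 ∈ U ∩ D := ⟨hy, y.2⟩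
      rw [hUD] at h1
      exact Subtype.ext h1
  rw [heq]
  exact hU.preimage continuous_subtype_val

theorem key [T3Space X] {κ : Cardinal.{u}} (hκ : ℵ₀ ≤ κ)
    {A : Set X} {p : X} (hp : p ∈ @closure X (gDelta tX) A)
    (hcon : ∀ B : Set X, B ⊆ A → #↥B ≤ 2 ^ κ → p ∉ @closure X (gDelta tX) B) :
    ∃ D : Set X, DiscreteTopology ↥D ∧ κ < #↥D := by
  classical
  have hstage : ∀ B : Set X, ∃ z : X × (ℕ → Set X), B ⊆ A → #↥B ≤ 2 ^ κ → StageProp A B z := by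
    intro B
    by_cases hB : B ⊆ A ∧ #↥B ≤ 2 ^ κ
    · have hncl := hcon B hB.1 hB.2
      have hopen : IsOpen[gDelta tX] (@closure X (gDelta tX) B)ᶜ :=
        compl_closure_isOpen (gDelta tX) B
      obtain ⟨G, hGδ, hpG, hGsub⟩ := gdelta_basic hopen hncl
      obtain ⟨V, hVopen, hpV, hVsub⟩ := exists_V hGδ hpG
      have hGopen : IsOpen[gDelta tX] (⋂ n, V n) :=
        TopologicalSpace.GenerateOpen.basic _ (IsGδ.iInter (fun n => (hVopen n).isGδ))
      obtain ⟨q, hqV, hqA⟩ :=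
        closure_inter_nonempty (gDelta tX) hp hGopen (mem_iInter.mpr hpV)
      refine ⟨(q, V), fun _ _ => ⟨hVopen, fun n => mem_iInter.mp hqV n, hqA, ?_⟩⟩
      intro b hb hbK
      exact (hGsub (hVsub hbK)) (subset_closure' (gDelta tX) B hb)
    · exact ⟨(p, fun _ => Set.univ), fun h1 h2 => absurd ⟨h1, h2⟩ hB⟩
  set I := (Order.succ ((2 : Cardinal.{u}) ^ κ)).ord.ToType with hIdef
  have hsmall : ∀ i : I, #{j : I // j < i} ≤ 2 ^ κ :=
    fun i => Order.lt_succ_iff.mp (ER.small_Iio _ i)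
  set x : I → X := fun i => (buildSeq A (2 ^ κ) hstage i).1 with hx
  set V : I → ℕ → Set X := fun i => (buildSeq A (2 ^ κ) hstage i).2 with hV
  set K : I → Set X := fun i => ⋂ n, closure (V i n) with hK
  have hspec := buildSeq_spec A (2 ^ κ) hstage hsmall
  have f1 : ∀ (i : I) (n : ℕ), IsOpen (V i n) := fun i n => (hspec i).1 n
  have f2 : ∀ (i : I) (n : ℕ), x i ∈ V i n := fun i n => (hspec i).2.1 n
  have f3 : ∀ i : I, x i ∈ A := fun i => (hspec i).2.2.1
  have f4 : ∀ j i : I, j < i → x j ∉ K i := by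
    intro j i hji
    exact (hspec i).2.2.2 (x j) ⟨f3 j, j, hji, rfl⟩
  have f5 : ∀ i : I, x i ∈ K i :=
    fun i => mem_iInter.mpr fun n => subset_closure (f2 i n)
  have hxinj : Function.Injective x := by
    intro i j hij
    rcases lt_trichotomy i j with h | h | h
    · have := f4 i j h
      rw [hij] at this
      exact absurd (f5 j) this
    · exact h
    · have := f4 j i h
      rw [← hij] at this
      exact absurd (f5 i) this
  set mcol : I → I → ℕ := fun j i => sInf {m | x j ∉ closure (V i m)} with hmcol
  set ncol : I → I → ℕ :=
    fun j i => if x i ∈ K j then 0 else sInf {n | x i ∉ closure (V j n)} + 1 with hncol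
  set c : I → I → ULift.{u} (ℕ × ℕ) := fun a b => ULift.up (ncol (a ⊓ b) (a ⊔ b), mcol (a ⊓ b) (a ⊔ b)) with hc
  have hsym : ∀ a b, c a b = c b a := by
    intro a b
    simp only [hc, inf_comm, sup_comm]
  have hCcard : #(ULift.{u} (ℕ × ℕ)) ≤ κ := by
    rw [Cardinal.mk_eq_aleph0]
    exact hκ
  have hIcard : Order.succ ((2 : Cardinal.{u}) ^ κ) ≤ #I := by
    rw [hIdef, Cardinal.mk_toType, Cardinal.card_ord]
  obtain ⟨H, col, hHcard, hhom⟩ := ER.exists_homogeneous hκ hCcard hIcard c hsym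
  have hrule : ∀ j ∈ H, ∀ i ∈ H, j < i → ncol j i = col.down.1 ∧ mcol j i = col.down.2 := by
    intro j hj i hi hji
    have h1 := hhom i hi j hj hji
    simp only [hc, inf_eq_left.mpr hji.le, sup_eq_right.mpr hji.le] at h1
    have h2 : (ncol j i, mcol j i) = col.down := congrArg ULift.down h1
    exact ⟨congrArg Prod.fst h2, congrArg Prod.snd h2⟩
  have mrule : ∀ j ∈ H, ∀ i ∈ H, j < i → x j ∉ closure (V i col.down.2) := by
    intro j hj i hi hji
    have hne : {m | x j ∉ closure (V i m)}.Nonempty := by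
      have h1 := f4 j i hji
      simp only [hK, mem_iInter, not_forall] at h1
      exact h1
    have h2 := Nat.sInf_mem hne
    have h3 := (hrule j hj i hi hji).2
    simp only [hmcol] at h3
    rw [h3] at h2
    exact h2
  rcases hcase : col.down.1 with _ | n
  · -- zero case : all later points lie in all earlier K's
    have hin : ∀ j ∈ H, ∀ i ∈ H, j < i → x i ∈ K j := by
      intro j hj i hi hji
      by_contra hnot
      have h1 := (hrule j hj i hi hji).1
      simp only [hncol, if_neg hnot, hcase] at h1
      exact Nat.succ_ne_zero _ h1
    set H' := {i | i ∈ H ∧ ∃ k ∈ H, i < k} with hH'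
    have hwf : WellFounded ((· < ·) : I → I → Prop) := IsWellFounded.wf
    have hsucc : ∀ j ∈ H', ∃ s, s ∈ H ∧ j < s ∧ ∀ k ∈ H, j < k → ¬ k < s := by
      intro j hj
      have hne : {k | k ∈ H ∧ j < k}.Nonempty := by
        obtain ⟨k, hk1, hk2⟩ := hj.2
        exact ⟨k, hk1, hk2⟩
      exact ⟨hwf.min _ hne, (hwf.min_mem _ hne).1, (hwf.min_mem _ hne).2,
        fun k hk hjk => hwf.not_lt_min _ (⟨hk, hjk⟩ : k ∈ {k | k ∈ H ∧ j < k})⟩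
    refine ⟨x '' H', discrete_of_isolated ?_, ?_⟩
    · rintro d ⟨j, hj, rfl⟩
      obtain ⟨s, hsH, hjs, hsmin⟩ := hsucc j hj
      refine ⟨(K s)ᶜ ∩ V j col.down.2,
        ((isClosed_iInter (fun n => isClosed_closure)).isOpen_compl).inter (f1 j col.down.2), ?_⟩
      ext z
      constructor
      · rintro ⟨⟨hz1, hz2⟩, i, hi, rfl⟩
        rcases lt_trichotomy i j with h | h | h
        · exact absurd (subset_closure hz2) (mrule i hi.1 j hj.1 h)
        · rw [h]; rfl
        · have hns : ¬ i < s := hsmin i hi.1 h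
          rcases (not_lt.mp hns).lt_or_eq with hlt | heq
          · exact absurd (hin s hsH i hi.1 hlt) hz1
          · rw [← heq] at hz1
            exact absurd (f5 s) hz1
      · intro hz
        rw [mem_singleton_iff] at hz
        subst hz
        exact ⟨⟨f4 j s hjs, f2 j col.down.2⟩, ⟨j, hj, rfl⟩⟩
    · rw [Cardinal.mk_image_eq hxinj]
      by_contra hle
      push_neg at hle
      have hle' : #↥H' ≤ κ := Order.lt_succ_iff.mp (lt_of_le_of_lt hle (Order.lt_succ κ))
      have hss : (H \ H' : Set I).Subsingleton := by
        intro u hu v hv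
        by_contra hne
        rcases Ne.lt_or_gt hne with h | h
        · exact hu.2 ⟨hu.1, v, hv.1, h⟩
        · exact hv.2 ⟨hv.1, u, hu.1, h⟩
      have hsubH : H' ⊆ H := fun i hi => hi.1
      have h1 : #↥H ≤ #↥H' + 1 := by
        calc #↥H = #↥(H' ∪ (H \ H')) := by rw [union_diff_cancel hsubH]
          _ ≤ #↥H' + #↥(H \ H' : Set I) := Cardinal.mk_union_le _ _
          _ ≤ #↥H' + 1 := add_le_add_right (Cardinal.mk_le_one_iff_set_subsingleton.mpr hss) _
      have h2 : Order.succ κ ≤ κ := by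
        refine (hHcard.trans h1).trans ?_
        calc #↥H' + 1 ≤ κ + κ := add_le_add hle' (le_trans Cardinal.one_le_aleph0 hκ)
          _ = κ := Cardinal.add_eq_self hκ
      exact (Order.lt_succ κ).not_ge h2
  · -- successor case
    refine ⟨x '' H, discrete_of_isolated ?_, ?_⟩
    · rintro d ⟨j, hj, rfl⟩
      refine ⟨V j n ∩ V j col.down.2, (f1 j n).inter (f1 j col.down.2), ?_⟩
      ext z
      constructor
      · rintro ⟨⟨hz1, hz2⟩, i, hi, rfl⟩
        rcases lt_trichotomy i j with h | h | h
        · exact absurd (subset_closure hz2) (mrule i hi j hj h)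
        · rw [h]; rfl
        · have h1 := (hrule j hj i hi h).1
          simp only [hncol, hcase] at h1
          by_cases hk : x i ∈ K j
          · rw [if_pos hk] at h1
            exact absurd h1.symm (Nat.succ_ne_zero n)
          · rw [if_neg hk] at h1
            have h2 : sInf {n' | x i ∉ closure (V j n')} = n := Nat.succ_injective h1
            have hne' : {n' | x i ∉ closure (V j n')}.Nonempty := by
              simp only [hK, mem_iInter, not_forall] at hk
              exact hk
            have h3 := Nat.sInf_mem hne'
            rw [h2] at h3
            exact absurd (subset_closure hz1) h3
      · intro hz
        rw [mem_singleton_iff] at hz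
        subst hz
        exact ⟨⟨f2 j n, f2 j col.down.2⟩, ⟨j, hj, rfl⟩⟩
    · rw [Cardinal.mk_image_eq hxinj]
      exact (Order.lt_succ κ).trans_le hHcard

end Statement12Aux

/-- for regular `X`, `t(X_δ) ≤ 2^{s(X)}`. -/
theorem statement12 {X : Type u} [tX : TopologicalSpace X] [T3Space X] :
    tightnessOf (gDelta tX) ≤ 2 ^ spreadOf X := by
  have hκ : ℵ₀ ≤ spreadOf X := le_sup_left
  apply csInf_le'
  refine ⟨hκ.trans (Cardinal.cantor _).le, ?_⟩
  intro A p hp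
  by_contra hcon
  push_neg at hcon
  obtain ⟨D, hdisc, hcard⟩ := Statement12Aux.key hκ hp hcon
  have hmem : #↥D ∈ {c : Cardinal.{u} | ∃ D' : Set X, DiscreteTopology ↥D' ∧ #↥D' = c} :=
    ⟨D, hdisc, rfl⟩
  have hbdd : BddAbove {c : Cardinal.{u} | ∃ D' : Set X, DiscreteTopology ↥D' ∧ #↥D' = c} := by
    refine ⟨#X, ?_⟩
    rintro c ⟨D', _, rfl⟩
    exact Cardinal.mk_set_le D'
  have hle : #↥D ≤ spreadOf X := (le_csSup hbdd hmem).trans le_sup_right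
  exact hcard.not_ge hle
end

section
/- There exists a separable Hausdorff space X such that the tightness of its G_δ-modification is greater than 2^{ℵ₀}. Witness: let Y = ω ∪ {nonprincipal ultrafilters on ω} be the Katětov extension of ω (points of ω isolated; a basic neighborhood of a nonprincipal ultrafilter p is {p} ∪ A with A ∈ p, modulo removing finite sets), and let X = Y ∪ {∞} where neighborhoods of ∞ are the sets V ∋ ∞ with |X \ V| ≤ 2^{ℵ₀}. -/
open Cardinal Set Topology

universe u

namespace St15

abbrev NN := List Bool

def pref (x : ℕ → Bool) (n : ℕ) : NN := (List.range n).map x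

def Apref (x : ℕ → Bool) : Set NN := Set.range (pref x)

lemma pref_injective (x : ℕ → Bool) : Function.Injective (pref x) := by
  intro n m h
  have := congrArg List.length h
  simpa [pref] using this

lemma Apref_infinite (x : ℕ → Bool) : (Apref x).Infinite :=
  Set.infinite_range_of_injective (pref_injective x)

lemma ad {x y : ℕ → Bool} (h : x ≠ y) : (Apref x ∩ Apref y).Finite := by
  obtain ⟨k, hk⟩ : ∃ k, x k ≠ y k := by
    by_contra hc
    push_neg at hc
    exact h (funext hc)
  have hsub : Apref x ∩ Apref y ⊆ (pref x) '' {n | n ≤ k} := by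
    rintro l ⟨⟨n, rfl⟩, ⟨m, hm⟩⟩
    have hlen : m = n := by
      have := congrArg List.length hm
      simpa [pref] using this
    subst hlen
    refine ⟨m, ?_, rfl⟩
    simp only [mem_setOf_eq]
    by_contra hnk
    push_neg at hnk
    have h1 : k < (pref y m).length := by simpa [pref] using hnk
    have hk' := List.getElem_of_eq hm h1
    simp [pref] at hk'
    exact hk hk'.symm
  exact Set.Finite.subset (Set.Finite.image _ (Set.finite_le_nat k)) hsub


abbrev DD := Finset ℕ × Finset (Finset ℕ)

open Classical in
noncomputable def cut (X : Set ℕ) (s : Finset ℕ) : Finset ℕ := s.filter (· ∈ X)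

open Classical in
lemma mem_cut {X : Set ℕ} {s : Finset ℕ} {n : ℕ} : n ∈ cut X s ↔ n ∈ s ∧ n ∈ X := by
  simp [cut]

def AX (X : Set ℕ) : Set DD := {d | cut X d.1 ∈ d.2}

-- independence
lemma indep (g : Set (Set ℕ)) (T : Set (Set ℕ)) (hT : T.Finite) :
    {d : DD | ∀ X ∈ T, (X ∈ g ↔ d ∈ AX X)}.Infinite := by
  classical
  -- choose separating points for cross pairs
  have hch : ∀ X Y : Set ℕ, X ≠ Y → ∃ n, ¬ (n ∈ X ↔ n ∈ Y) := by
    intro X Y hXY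
    by_contra hc
    push_neg at hc
    exact hXY (Set.ext fun n => (hc n))
  set ch : Set ℕ → Set ℕ → ℕ := fun X Y =>
    if h : X ≠ Y then (hch X Y h).choose else 0 with hchdef
  have hchspec : ∀ X Y : Set ℕ, X ≠ Y → ¬ (ch X Y ∈ X ↔ ch X Y ∈ Y) := by
    intro X Y h
    simp only [hchdef, dif_pos h]
    exact (hch X Y h).choose_spec
  have hTg : (T ∩ g).Finite := hT.inter_of_left g
  have hTg' : (T \ g).Finite := hT.diff
  have hs0fin : (Set.image2 ch (T ∩ g) (T \ g)).Finite := Set.Finite.image2 _ hTg hTg'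
  set s₀ : Finset ℕ := hs0fin.toFinset with hs0def
  set M : ℕ := s₀.sup id + 1 with hMdef
  have hs0range : ∀ k, s₀ ⊆ Finset.range (M + k) := by
    intro k m hm
    simp only [Finset.mem_range]
    have : m ≤ s₀.sup id := Finset.le_sup (f := id) hm
    omega
  set f : ℕ → Finset ℕ := fun k => s₀ ∪ Finset.range (M + k) with hfdef
  have hfeq : ∀ k, f k = Finset.range (M + k) := by
    intro k
    simp only [hfdef]
    exact Finset.union_eq_right.mpr (hs0range k)
  have hfinj : Function.Injective f := by
    intro a b hab
    rw [hfeq, hfeq] at hab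
    have := congrArg Finset.card hab
    simpa using this
  set Sc : ℕ → Finset (Finset ℕ) := fun k => hTg.toFinset.image (fun X => cut X (f k)) with hScdef
  set d : ℕ → DD := fun k => (f k, Sc k) with hddef
  have hdinj : Function.Injective d := fun a b hab => hfinj (congrArg Prod.fst hab)
  refine Set.infinite_of_injective_forall_mem hdinj ?_
  intro k X hX
  constructor
  · intro hXg
    show cut X (f k) ∈ Sc k
    simp only [hScdef, Finset.mem_image]
    exact ⟨X, by simpa [Set.Finite.mem_toFinset] using ⟨hX, hXg⟩, rfl⟩
  · intro hmem
    by_contra hXg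
    obtain ⟨Y, hY, hYX⟩ : ∃ Y ∈ hTg.toFinset, cut Y (f k) = cut X (f k) := by
      have hmem' : cut X (f k) ∈ Sc k := hmem
      simpa only [hScdef, Finset.mem_image] using hmem'
    rw [Set.Finite.mem_toFinset] at hY
    have hne : Y ≠ X := by
      rintro rfl
      exact hXg hY.2
    have hchm : ch Y X ∈ s₀ := by
      rw [hs0def, Set.Finite.mem_toFinset]
      exact Set.mem_image2_of_mem hY ⟨hX, hXg⟩
    have hchf : ch Y X ∈ f k := Finset.mem_union_left _ hchm
    have : ch Y X ∈ cut Y (f k) ↔ ch Y X ∈ cut X (f k) := by rw [hYX]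
    rw [mem_cut, mem_cut] at this
    exact hchspec Y X hne (by tauto)

open Classical in
noncomputable def Bset (g : Set (Set ℕ)) (X : Set ℕ) : Set DD :=
  if X ∈ g then AX X else (AX X)ᶜ

def Sg (g : Set (Set ℕ)) : Set (Set DD) :=
  {u | ∃ X, u = Bset g X} ∪ {u | uᶜ.Finite}

lemma mem_Bset {g : Set (Set ℕ)} {X : Set ℕ} {d : DD}
    (hd : X ∈ g ↔ d ∈ AX X) : d ∈ Bset g X := by
  classical
  by_cases hX : X ∈ g
  · simpa [Bset, hX] using hd.mp hX
  · simp only [Bset, if_neg hX]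
    exact fun hmem => hX (hd.mpr hmem)

lemma neBot_generate_Sg (g : Set (Set ℕ)) : (Filter.generate (Sg g)).NeBot := by
  classical
  rw [Filter.generate_neBot_iff]
  intro t hsub hfin
  set pick : Set DD → Set ℕ := fun u =>
    if h : ∃ X, u = Bset g X then h.choose else ∅ with hpickdef
  set T : Set (Set ℕ) := pick '' t with hTdef
  have hTfin : T.Finite := hfin.image _
  set W := {d : DD | ∀ X ∈ T, (X ∈ g ↔ d ∈ AX X)} with hWdef
  have hWinf : W.Infinite := indep g T hTfin
  set K := ⋃ u ∈ {u ∈ t | ¬ ∃ X, u = Bset g X}, uᶜ with hKdef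
  have hKfin : K.Finite := by
    apply Set.Finite.biUnion (hfin.subset (Set.sep_subset _ _))
    rintro u ⟨hut, hu⟩
    rcases hsub hut with h | h
    · exact absurd h hu
    · exact h
  have hsubset : W \ K ⊆ ⋂₀ t := by
    rintro d ⟨hdW, hdK⟩ u hut
    by_cases h : ∃ X, u = Bset g X
    · have hpick : u = Bset g (pick u) := by
        rw [hpickdef]
        simpa only [dif_pos h] using h.choose_spec
      rw [hpick]
      exact mem_Bset (hdW (pick u) ⟨u, hut, rfl⟩)
    · by_contra hdu
      exact hdK (Set.mem_biUnion ⟨hut, h⟩ hdu)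
  have : (W \ K).Infinite := hWinf.diff hKfin
  exact (this.nonempty).mono hsubset

noncomputable def ug (g : Set (Set ℕ)) : Ultrafilter DD :=
  @Ultrafilter.of _ (Filter.generate (Sg g)) (neBot_generate_Sg g)

lemma mem_ug {g : Set (Set ℕ)} {u : Set DD} (hu : u ∈ Sg g) : u ∈ ug g := by
  have h1 : u ∈ Filter.generate (Sg g) := Filter.mem_generate_of_mem hu
  exact (@Ultrafilter.of_le _ (Filter.generate (Sg g)) (neBot_generate_Sg g)) h1

lemma ug_cofinite (g : Set (Set ℕ)) : (ug g : Filter DD) ≤ Filter.cofinite := by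
  intro s hs
  exact mem_ug (Or.inr hs)

lemma ug_injective : Function.Injective ug := by
  classical
  intro g g' h
  by_contra hne
  obtain ⟨X, hX⟩ : ∃ X : Set ℕ, ¬ (X ∈ g ↔ X ∈ g') := by
    by_contra hc
    push_neg at hc
    exact hne (Set.ext hc)
  -- wlog X ∈ g, X ∉ g'
  have key : ∀ a b : Set (Set ℕ), ug a = ug b → X ∈ a → X ∉ b → False := by
    intro a b hab hXa hXb
    have h1 : AX X ∈ ug a := by
      have : Bset a X ∈ ug a := mem_ug (Or.inl ⟨X, rfl⟩)
      simpa [Bset, hXa] using this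
    have h2 : (AX X)ᶜ ∈ ug b := by
      have : Bset b X ∈ ug b := mem_ug (Or.inl ⟨X, rfl⟩)
      simpa [Bset, hXb] using this
    rw [hab] at h1
    have hne' := Filter.nonempty_of_mem (Filter.inter_mem h1 h2)
    simp at hne'
  rcases Classical.em (X ∈ g) with hXg | hXg
  · exact key g g' h hXg (fun hXg' => hX ⟨fun _ => hXg', fun _ => hXg⟩)
  · have hXg' : X ∈ g' := by tauto
    exact key g' g h.symm hXg' hXg


lemma lots_of_ultra {A : Set NN} (hA : A.Infinite) :
    (2 : Cardinal.{0}) ^ ℵ₀ <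
      #{q : Ultrafilter NN // (q : Filter NN) ≤ Filter.cofinite ∧ A ∈ q} := by
  classical
  have hinfA : Infinite ↥A := hA.to_subtype
  obtain ⟨dA⟩ := nonempty_denumerable ↥A
  obtain ⟨dD⟩ := nonempty_denumerable DD
  let e : DD ≃ ↥A := (Denumerable.eqv DD).trans (Denumerable.eqv ↥A).symm
  let emb : DD → NN := fun d => (e d : NN)
  have hembinj : Function.Injective emb := fun a b h =>
    e.injective (Subtype.val_injective h)
  have hembrange : ∀ d, emb d ∈ A := fun d => (e d).2
  let Φ : Set (Set ℕ) → Ultrafilter NN := fun g => (ug g).map emb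
  have hΦmem : ∀ g s, s ∈ Φ g ↔ emb ⁻¹' s ∈ ug g := by
    intro g s
    exact Ultrafilter.mem_map
  have hΦfree : ∀ g, (Φ g : Filter NN) ≤ Filter.cofinite := by
    intro g s hs
    rw [Ultrafilter.mem_coe, hΦmem]
    apply ug_cofinite g
    rw [Filter.mem_cofinite] at hs ⊢
    rw [← Set.preimage_compl]
    exact hs.preimage (hembinj.injOn)
  have hΦA : ∀ g, A ∈ Φ g := by
    intro g
    rw [hΦmem]
    have hu : emb ⁻¹' A = Set.univ := eq_univ_of_forall fun d => hembrange d
    rw [hu]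
    exact Filter.univ_mem
  have hΦinj : Function.Injective Φ := by
    intro g g' h
    apply ug_injective
    have hsets : ∀ s, s ∈ ug g ↔ s ∈ ug g' := by
      intro s
      have h1 : emb ⁻¹' (emb '' s) = s := Set.preimage_image_eq s hembinj
      constructor
      · intro hs
        have : emb '' s ∈ Φ g := by rw [hΦmem, h1]; exact hs
        rw [h] at this
        rw [hΦmem, h1] at this
        exact this
      · intro hs
        have : emb '' s ∈ Φ g' := by rw [hΦmem, h1]; exact hs
        rw [← h] at this
        rw [hΦmem, h1] at this
        exact this
    exact Ultrafilter.coe_injective (Filter.ext hsets)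
  have hle : #(Set (Set ℕ)) ≤
      #{q : Ultrafilter NN // (q : Filter NN) ≤ Filter.cofinite ∧ A ∈ q} := by
    apply Cardinal.mk_le_of_injective
      (f := fun g => (⟨Φ g, hΦfree g, hΦA g⟩ :
        {q : Ultrafilter NN // (q : Filter NN) ≤ Filter.cofinite ∧ A ∈ q}))
    intro a b hab
    exact hΦinj (congrArg Subtype.val hab)
  have hcard : #(Set (Set ℕ)) = 2 ^ ((2 : Cardinal.{0}) ^ ℵ₀) := by
    rw [Cardinal.mk_set, Cardinal.mk_set, Cardinal.mk_nat]
  refine lt_of_lt_of_le ?_ hle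
  rw [hcard]
  exact Cardinal.cantor _


def UU : Type := {q : Ultrafilter NN // (q : Filter NN) ≤ Filter.cofinite ∧ ∃ x, Apref x ∈ q}

abbrev XX : Type := Option (NN ⊕ UU)

def emN (l : NN) : XX := some (Sum.inl l)
def emU (q : UU) : XX := some (Sum.inr q)
def infty : XX := none

lemma emN_injective : Function.Injective emN := by
  intro a b h
  simpa [emN] using h

lemma emU_injective : Function.Injective emU := by
  intro a b h
  simpa [emU] using h

lemma emN_ne_emU (l : NN) (q : UU) : emN l ≠ emU q := by simp [emN, emU]

lemma infty_ne_emN (l : NN) : infty ≠ emN l := by simp [infty, emN]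

lemma infty_ne_emU (q : UU) : infty ≠ emU q := by simp [infty, emU]

def hat (x : ℕ → Bool) : Set XX :=
  (emN '' Apref x) ∪ {z | ∃ q : UU, Apref x ∈ q.1 ∧ z = emU q}

lemma infty_notin_hat (x : ℕ → Bool) : infty ∉ hat x := by
  rintro (⟨l, _, hl⟩ | ⟨q, _, hq⟩)
  · exact infty_ne_emN l hl.symm
  · exact infty_ne_emU q hq

lemma emU_mem_hat {x : ℕ → Bool} {q : UU} : emU q ∈ hat x ↔ Apref x ∈ q.1 := by
  constructor
  · rintro (⟨l, _, hl⟩ | ⟨q', hq', he⟩)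
    · exact absurd hl (emN_ne_emU l q)
    · rwa [← emU_injective he] at hq'
  · intro h
    exact Or.inr ⟨q, h, rfl⟩

lemma emN_mem_hat {x : ℕ → Bool} {l : NN} : emN l ∈ hat x ↔ l ∈ Apref x := by
  constructor
  · rintro (⟨l', hl', he⟩ | ⟨q', _, he⟩)
    · rwa [emN_injective he] at hl'
    · exact absurd he (emN_ne_emU l q')
  · intro h
    exact Or.inl ⟨l, h, rfl⟩

noncomputable abbrev cont : Cardinal.{0} := (2 : Cardinal.{0}) ^ ℵ₀

lemma aleph0_le_cont : ℵ₀ ≤ cont := (Cardinal.cantor ℵ₀).le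

def NOpen (O : Set XX) : Prop :=
  (∀ q : UU, emU q ∈ O → {l | emN l ∈ O} ∈ q.1) ∧
  (infty ∈ O → ∃ (F : Set (ℕ → Bool)) (S : Set XX), F.Finite ∧ #S ≤ cont ∧
    Oᶜ ⊆ (⋃ x ∈ F, hat x) ∪ S)

def tXX : TopologicalSpace XX where
  IsOpen := NOpen
  isOpen_univ := by
    constructor
    · intro q _
      exact Filter.univ_mem' (fun l => Set.mem_univ _)
    · intro _
      exact ⟨∅, ∅, finite_empty, by simp, by simp⟩
  isOpen_inter := by
    rintro O₁ O₂ ⟨h1a, h1b⟩ ⟨h2a, h2b⟩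
    constructor
    · intro q hq
      have := Filter.inter_mem (h1a q hq.1) (h2a q hq.2)
      exact Filter.mem_of_superset this (fun l hl => ⟨hl.1, hl.2⟩)
    · rintro ⟨hi1, hi2⟩
      obtain ⟨F₁, S₁, hF₁, hS₁, hc₁⟩ := h1b hi1
      obtain ⟨F₂, S₂, hF₂, hS₂, hc₂⟩ := h2b hi2
      refine ⟨F₁ ∪ F₂, S₁ ∪ S₂, hF₁.union hF₂, ?_, ?_⟩
      · refine (Cardinal.mk_union_le _ _).trans ?_
        refine (add_le_add hS₁ hS₂).trans ?_
        rw [Cardinal.add_eq_self aleph0_le_cont]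
      · intro z hz
        rcases Set.notMem_subset (t := O₁ ∩ O₂) (Set.Subset.refl _) hz with _
        have hz' : z ∉ O₁ ∨ z ∉ O₂ := by
          by_contra hc
          push_neg at hc
          exact hz ⟨hc.1, hc.2⟩
        rcases hz' with h | h
        · rcases hc₁ h with hh | hh
          · rcases Set.mem_iUnion₂.mp hh with ⟨x, hx, hmem⟩
            exact Or.inl (Set.mem_iUnion₂.mpr ⟨x, Or.inl hx, hmem⟩)
          · exact Or.inr (Or.inl hh)
        · rcases hc₂ h with hh | hh
          · rcases Set.mem_iUnion₂.mp hh with ⟨x, hx, hmem⟩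
            exact Or.inl (Set.mem_iUnion₂.mpr ⟨x, Or.inr hx, hmem⟩)
          · exact Or.inr (Or.inr hh)
  isOpen_sUnion := by
    intro s hs
    constructor
    · intro q hq
      obtain ⟨O, hOs, hqO⟩ := hq
      exact Filter.mem_of_superset ((hs O hOs).1 q hqO) (fun l hl => ⟨O, hOs, hl⟩)
    · rintro ⟨O, hOs, hiO⟩
      obtain ⟨F, S, hF, hS, hc⟩ := (hs O hOs).2 hiO
      exact ⟨F, S, hF, hS, fun z hz => hc (fun hzO => hz ⟨O, hOs, hzO⟩)⟩

lemma isOpen_tXX {O : Set XX} : @IsOpen XX tXX O ↔ NOpen O := Iff.rfl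


lemma free_inter_finite {q : Ultrafilter NN} (hq : (q : Filter NN) ≤ Filter.cofinite)
    {W₁ W₂ : Set NN} (h1 : W₁ ∈ q) (h2 : W₂ ∈ q) (hfin : (W₁ ∩ W₂).Finite) : False := by
  have h3 : (W₁ ∩ W₂)ᶜ ∈ q := hq (by rwa [Filter.mem_cofinite, compl_compl])
  have := Filter.nonempty_of_mem (Filter.inter_mem (Filter.inter_mem h1 h2) h3)
  simp at this

lemma exists_emU_outside (C : Set (ℕ → Bool)) (hC : C.Countable) (S : Set XX)
    (hS : #S ≤ cont) :
    ∃ q : UU, emU q ∉ (⋃ x ∈ C, hat x) ∪ S := by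
  classical
  obtain ⟨y, hy⟩ : ∃ y : ℕ → Bool, y ∉ C := by
    by_contra hc
    push_neg at hc
    have huniv : C = Set.univ := Set.eq_univ_of_forall hc
    have : (Set.univ : Set (ℕ → Bool)).Countable := huniv ▸ hC
    have hcnt : Countable (ℕ → Bool) := Set.countable_univ_iff.mp this
    have h1 : #(ℕ → Bool) ≤ ℵ₀ := Cardinal.mk_le_aleph0
    have h2 : #(ℕ → Bool) = cont := by
      show #(ℕ → Bool) = 2 ^ ℵ₀
      rw [← Cardinal.mk_bool, ← Cardinal.mk_nat, Cardinal.power_def]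
    rw [h2] at h1
    exact absurd h1 (not_le.mpr (Cardinal.cantor ℵ₀))
  by_contra hcon
  push_neg at hcon
  have hψ : ∀ q : {q : Ultrafilter NN // (q : Filter NN) ≤ Filter.cofinite ∧ Apref y ∈ q},
      emU ⟨q.1, q.2.1, ⟨y, q.2.2⟩⟩ ∈ S := by
    intro q
    set q' : UU := ⟨q.1, q.2.1, ⟨y, q.2.2⟩⟩ with hq'
    rcases hcon q' with h | h
    · exfalso
      rcases Set.mem_iUnion₂.mp h with ⟨x, hxC, hmem⟩
      have hx : Apref x ∈ q'.1 := emU_mem_hat.mp hmem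
      have hxy : x ≠ y := fun he => hy (he ▸ hxC)
      exact free_inter_finite q.2.1 hx q.2.2 (ad hxy)
    · exact h
  have hinj : Function.Injective
      (fun q : {q : Ultrafilter NN // (q : Filter NN) ≤ Filter.cofinite ∧ Apref y ∈ q} =>
        (⟨emU ⟨q.1, q.2.1, ⟨y, q.2.2⟩⟩, hψ q⟩ : ↥S)) := by
    intro a b hab
    have h1 := congrArg Subtype.val hab
    simp only at h1
    have h2 := emU_injective h1
    exact Subtype.ext (congrArg (fun u : UU => u.val) h2)
  have hle := Cardinal.mk_le_of_injective hinj
  exact absurd (lt_of_lt_of_le (lots_of_ultra (Apref_infinite y)) (hle.trans hS)) (lt_irrefl _)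

lemma gdelta_nbhd (O : Set XX) (hO : @IsOpen XX (gDelta tXX) O) (hi : infty ∈ O) :
    ∃ (C : Set (ℕ → Bool)) (S : Set XX), C.Countable ∧ #S ≤ cont ∧
      Oᶜ ⊆ (⋃ x ∈ C, hat x) ∪ S := by
  classical
  revert hi
  change TopologicalSpace.GenerateOpen _ O at hO
  induction hO with
  | basic s hs =>
    intro hi
    obtain ⟨T, hTopen, hTcnt, rfl⟩ := hs
    have hiT : ∀ t ∈ T, infty ∈ t := fun t ht => hi t ht
    have hchoice : ∀ t : ↥T, ∃ (F : Set (ℕ → Bool)) (S : Set XX), F.Finite ∧ #S ≤ cont ∧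
        (↑t : Set XX)ᶜ ⊆ (⋃ x ∈ F, hat x) ∪ S := by
      intro t
      exact (hTopen t t.2).2 (hiT t t.2)
    choose F S hF hS hc using hchoice
    haveI : Countable ↥T := hTcnt.to_subtype
    refine ⟨⋃ t : ↥T, F t, ⋃ t : ↥T, S t, countable_iUnion (fun t => (hF t).countable), ?_, ?_⟩
    · refine (Cardinal.mk_iUnion_le _).trans ?_
      have h1 : #↥T ≤ ℵ₀ := Cardinal.mk_le_aleph0
      have h2 : ⨆ t : ↥T, #↥(S t) ≤ cont := ciSup_le' hS
      refine (mul_le_mul' h1 h2).trans ?_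
      rw [Cardinal.mul_eq_max le_rfl aleph0_le_cont, max_eq_right aleph0_le_cont]
    · intro z hz
      have : ∃ t ∈ T, z ∉ t := by
        by_contra hc'
        push_neg at hc'
        exact hz (fun t ht => hc' t ht)
      obtain ⟨t, htT, hzt⟩ := this
      rcases hc ⟨t, htT⟩ hzt with h | h
      · rcases Set.mem_iUnion₂.mp h with ⟨x, hx, hmem⟩
        exact Or.inl (Set.mem_iUnion₂.mpr ⟨x, Set.mem_iUnion.mpr ⟨⟨t, htT⟩, hx⟩, hmem⟩)
      · exact Or.inr (Set.mem_iUnion.mpr ⟨⟨t, htT⟩, h⟩)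
  | univ =>
    intro _
    exact ⟨∅, ∅, countable_empty, by simp, by simp⟩
  | inter O₁ O₂ h1 h2 ih1 ih2 =>
    rintro ⟨hi1, hi2⟩
    obtain ⟨C₁, S₁, hC₁, hS₁, hc₁⟩ := ih1 hi1
    obtain ⟨C₂, S₂, hC₂, hS₂, hc₂⟩ := ih2 hi2
    refine ⟨C₁ ∪ C₂, S₁ ∪ S₂, hC₁.union hC₂, ?_, ?_⟩
    · refine (Cardinal.mk_union_le _ _).trans ?_
      refine (add_le_add hS₁ hS₂).trans ?_
      rw [Cardinal.add_eq_self aleph0_le_cont]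
    · intro z hz
      have hz' : z ∉ O₁ ∨ z ∉ O₂ := by
        by_contra hc
        push_neg at hc
        exact hz ⟨hc.1, hc.2⟩
      rcases hz' with h | h
      · rcases hc₁ h with hh | hh
        · rcases Set.mem_iUnion₂.mp hh with ⟨x, hx, hmem⟩
          exact Or.inl (Set.mem_iUnion₂.mpr ⟨x, Or.inl hx, hmem⟩)
        · exact Or.inr (Or.inl hh)
      · rcases hc₂ h with hh | hh
        · rcases Set.mem_iUnion₂.mp hh with ⟨x, hx, hmem⟩
          exact Or.inl (Set.mem_iUnion₂.mpr ⟨x, Or.inr hx, hmem⟩)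
        · exact Or.inr (Or.inr hh)
  | sUnion s hs ih =>
    rintro ⟨O, hOs, hiO⟩
    obtain ⟨C, S, hC, hS, hc⟩ := ih O hOs hiO
    exact ⟨C, S, hC, hS, fun z hz => hc (fun hzO => hz ⟨O, hOs, hzO⟩)⟩

lemma notin_closure_small (B : Set XX) (hB : B ⊆ Set.range emU) (hBc : #B ≤ cont) :
    infty ∉ @closure XX (gDelta tXX) B := by
  have hopen : NOpen Bᶜ := by
    constructor
    · intro q _
      refine Filter.univ_mem' (fun l => ?_)
      intro hl
      obtain ⟨q', hq'⟩ := hB hl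
      exact emN_ne_emU l q' hq'.symm
    · intro _
      exact ⟨∅, B, finite_empty, hBc, by simp⟩
  have hgd : @IsGδ XX tXX Bᶜ := @IsOpen.isGδ XX tXX _ hopen
  letI := gDelta tXX
  have hgdop : IsOpen Bᶜ := TopologicalSpace.GenerateOpen.basic _ hgd
  have hclosed : IsClosed B := by
    rw [← isOpen_compl_iff]
    exact hgdop
  intro hmem
  have := hclosed.closure_subset hmem
  obtain ⟨q, hq⟩ := hB this
  exact infty_ne_emU q hq.symm

lemma infty_mem_closure : infty ∈ @closure XX (gDelta tXX) (Set.range emU) := by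
  letI := gDelta tXX
  rw [mem_closure_iff]
  intro O hO hiO
  obtain ⟨C, S, hC, hS, hc⟩ := gdelta_nbhd O hO hiO
  obtain ⟨q, hq⟩ := exists_emU_outside C hC S hS
  refine ⟨emU q, ?_, Set.mem_range_self q⟩
  by_contra hqO
  exact hq (hc hqO)


lemma card_singleton_le (z : XX) : #↥({z} : Set XX) ≤ cont :=
  Cardinal.mk_le_aleph0.trans aleph0_le_cont

lemma NOpen_singleton_emN (n : NN) : NOpen {emN n} := by
  constructor
  · intro q hq
    exact absurd (Set.mem_singleton_iff.mp hq) (emN_ne_emU n q).symm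
  · intro hi
    exact absurd (Set.mem_singleton_iff.mp hi) (infty_ne_emN n)

lemma NOpen_compl_singleton_emN (n : NN) : NOpen {emN n}ᶜ := by
  constructor
  · intro q _
    have hcof : ({n}ᶜ : Set NN) ∈ q.1 := q.2.1 (by simp [Filter.mem_cofinite])
    refine Filter.mem_of_superset hcof ?_
    intro l hl
    simp only [Set.mem_compl_iff, Set.mem_singleton_iff] at hl ⊢
    exact fun he => hl (emN_injective he)
  · intro _
    exact ⟨∅, {emN n}, finite_empty, card_singleton_le _, by simp⟩

lemma sep_emN (n : NN) (z : XX) (h : emN n ≠ z) :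
    ∃ u v, NOpen u ∧ NOpen v ∧ emN n ∈ u ∧ z ∈ v ∧ Disjoint u v :=
  ⟨{emN n}, {emN n}ᶜ, NOpen_singleton_emN n, NOpen_compl_singleton_emN n,
    rfl, fun he => h ((Set.mem_singleton_iff.mp he).symm), disjoint_compl_right⟩

lemma ultrafilter_sep {p q : Ultrafilter NN} (h : p ≠ q) : ∃ B, B ∈ p ∧ Bᶜ ∈ q := by
  have hne : ∃ s, ¬ (s ∈ p ↔ s ∈ q) := by
    by_contra hc
    push_neg at hc
    exact h (Ultrafilter.coe_injective (Filter.ext fun s => hc s))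
  obtain ⟨s, hs⟩ := hne
  rcases Classical.em (s ∈ p) with h1 | h1
  · have h2 : s ∉ q := fun h2 => hs ⟨fun _ => h2, fun _ => h1⟩
    exact ⟨s, h1, Ultrafilter.compl_mem_iff_notMem.mpr h2⟩
  · have h2 : s ∈ q := by tauto
    refine ⟨sᶜ, Ultrafilter.compl_mem_iff_notMem.mpr h1, by rwa [compl_compl]⟩

lemma sep_UU (p q : UU) (h : p ≠ q) :
    ∃ u v, NOpen u ∧ NOpen v ∧ emU p ∈ u ∧ emU q ∈ v ∧ Disjoint u v := by
  have hval : p.1 ≠ q.1 := fun hv => h (Subtype.ext hv)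
  obtain ⟨B, hBp, hBq⟩ := ultrafilter_sep hval
  refine ⟨{emU p} ∪ emN '' B, {emU q} ∪ emN '' Bᶜ, ?_, ?_, Or.inl rfl, Or.inl rfl, ?_⟩
  · constructor
    · rintro q' (hq' | ⟨l, _, hl⟩)
      · have : q' = p := emU_injective (Set.mem_singleton_iff.mp hq')
        subst this
        exact Filter.mem_of_superset hBp (fun l hl => Or.inr ⟨l, hl, rfl⟩)
      · exact absurd hl (emN_ne_emU l q')
    · rintro (hi | ⟨l, _, hl⟩)
      · exact absurd (Set.mem_singleton_iff.mp hi) (infty_ne_emU p)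
      · exact absurd hl (infty_ne_emN l).symm
  · constructor
    · rintro q' (hq' | ⟨l, _, hl⟩)
      · have : q' = q := emU_injective (Set.mem_singleton_iff.mp hq')
        subst this
        exact Filter.mem_of_superset hBq (fun l hl => Or.inr ⟨l, hl, rfl⟩)
      · exact absurd hl (emN_ne_emU l q')
    · rintro (hi | ⟨l, _, hl⟩)
      · exact absurd (Set.mem_singleton_iff.mp hi) (infty_ne_emU q)
      · exact absurd hl (infty_ne_emN l).symm
  · rw [Set.disjoint_left]
    rintro z (hz | ⟨l, hl, rfl⟩)
    · rw [Set.mem_singleton_iff] at hz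
      subst hz
      rintro (hz' | ⟨l, _, hl⟩)
      · exact hval (congrArg Subtype.val (emU_injective (Set.mem_singleton_iff.mp hz')))
      · exact emN_ne_emU l p hl
    · rintro (hz' | ⟨l', hl', he⟩)
      · exact emN_ne_emU l q (Set.mem_singleton_iff.mp hz')
      · have hll : l' = l := emN_injective he
        subst hll
        exact hl' hl

lemma sep_U_inf (p : UU) :
    ∃ u v, NOpen u ∧ NOpen v ∧ emU p ∈ u ∧ infty ∈ v ∧ Disjoint u v := by
  obtain ⟨x, hx⟩ := p.2.2
  refine ⟨{emU p} ∪ emN '' Apref x, ({emU p} ∪ hat x)ᶜ, ?_, ?_, Or.inl rfl, ?_, ?_⟩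
  · constructor
    · rintro q' (hq' | ⟨l, _, hl⟩)
      · have : q' = p := emU_injective (Set.mem_singleton_iff.mp hq')
        subst this
        exact Filter.mem_of_superset hx (fun l hl => Or.inr ⟨l, hl, rfl⟩)
      · exact absurd hl (emN_ne_emU l q')
    · rintro (hi | ⟨l, _, hl⟩)
      · exact absurd (Set.mem_singleton_iff.mp hi) (infty_ne_emU p)
      · exact absurd hl (infty_ne_emN l).symm
  · constructor
    · intro q' hq'
      have hq'x : Apref x ∉ q'.1 := fun hmem =>
        hq' (Or.inr (emU_mem_hat.mpr hmem))
      have hcompl : (Apref x)ᶜ ∈ q'.1 := Ultrafilter.compl_mem_iff_notMem.mpr hq'x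
      refine Filter.mem_of_superset hcompl ?_
      intro l hl
      rintro (hz | hz)
      · exact emN_ne_emU l p (Set.mem_singleton_iff.mp hz)
      · exact hl (emN_mem_hat.mp hz)
    · intro _
      refine ⟨{x}, {emU p}, Set.finite_singleton x, card_singleton_le _, ?_⟩
      intro z hz
      rw [compl_compl] at hz
      rcases hz with hz | hz
      · exact Or.inr hz
      · exact Or.inl (Set.mem_iUnion₂.mpr ⟨x, rfl, hz⟩)
  · rintro (hi | hi)
    · exact absurd (Set.mem_singleton_iff.mp hi) (infty_ne_emU p)
    · exact infty_notin_hat x hi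
  · rw [Set.disjoint_left]
    rintro z (hz | ⟨l, hl, rfl⟩) hzv
    · rw [Set.mem_singleton_iff] at hz
      subst hz
      exact hzv (Or.inl rfl)
    · exact hzv (Or.inr (emN_mem_hat.mpr hl))


lemma t2_XX : @T2Space XX tXX := by
  letI := tXX
  constructor
  intro a b hab
  have swap : ∀ {x y : XX}, (∃ u v, NOpen u ∧ NOpen v ∧ x ∈ u ∧ y ∈ v ∧ Disjoint u v) →
      (∃ u v, NOpen u ∧ NOpen v ∧ y ∈ u ∧ x ∈ v ∧ Disjoint u v) := by
    rintro x y ⟨u, v, hu, hv, h1, h2, hd⟩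
    exact ⟨v, u, hv, hu, h2, h1, hd.symm⟩
  rcases a with _ | (n | p) <;> rcases b with _ | (m | q)
  · exact absurd rfl hab
  · exact swap (sep_emN m infty (infty_ne_emN m).symm)
  · exact swap (sep_U_inf q)
  · exact sep_emN n infty (infty_ne_emN n).symm.symm.symm
  · exact sep_emN n (emN m) (fun he => hab he)
  · exact sep_emN n (emU q) (emN_ne_emU n q)
  · exact sep_U_inf p
  · exact swap (sep_emN m (emU p) (emN_ne_emU m p))
  · refine sep_UU p q (fun he => hab ?_)
    rw [he]

lemma separable_XX : @TopologicalSpace.SeparableSpace XX tXX := by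
  letI := tXX
  refine ⟨⟨Set.range emN, Set.countable_range emN, ?_⟩⟩
  rw [dense_iff_inter_open]
  rintro O hO ⟨z, hz⟩
  have hO' : NOpen O := hO
  rcases z with _ | (n | q)
  · obtain ⟨F, S, hF, hS, hc⟩ := hO'.2 hz
    by_contra hno
    have hnoN : ∀ l, emN l ∉ O := fun l hl => hno ⟨emN l, hl, ⟨l, rfl⟩⟩
    have hnoU : ∀ q' : UU, emU q' ∉ O := by
      intro q' hq'
      obtain ⟨l, hl⟩ := Filter.nonempty_of_mem (hO'.1 q' hq')
      exact hnoN l hl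
    obtain ⟨q', hq'⟩ := exists_emU_outside F hF.countable S hS
    exact hq' (hc (hnoU q'))
  · exact ⟨emN n, hz, ⟨n, rfl⟩⟩
  · obtain ⟨l, hl⟩ := Filter.nonempty_of_mem (hO'.1 q hz)
    exact ⟨emN l, hl, ⟨l, rfl⟩⟩

lemma tight_XX : cont < tightnessOf (gDelta tXX) := by
  set 𝒮 := {κ : Cardinal.{0} | ℵ₀ ≤ κ ∧ ∀ (A : Set XX) (p : XX),
      p ∈ @closure XX (gDelta tXX) A →
      ∃ B ⊆ A, #↥B ≤ κ ∧ p ∈ @closure XX (gDelta tXX) B} with h𝒮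
  have hne : 𝒮.Nonempty := by
    refine ⟨ℵ₀ ⊔ #XX, le_sup_left, fun A p hp => ⟨A, Set.Subset.rfl, ?_, hp⟩⟩
    exact (Cardinal.mk_set_le A).trans le_sup_right
  have hlb : ∀ κ ∈ 𝒮, cont < κ := by
    rintro κ ⟨hκ1, hκ2⟩
    by_contra hle
    push_neg at hle
    obtain ⟨B, hBsub, hBcard, hBcl⟩ := hκ2 (Set.range emU) infty infty_mem_closure
    exact notin_closure_small B hBsub (hBcard.trans hle) hBcl
  have : tightnessOf (gDelta tXX) = sInf 𝒮 := rfl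
  rw [this]
  exact hlb _ (csInf_mem hne)

end St15

/-- there is a separable Hausdorff space `X` with
`t(X_δ) > 2^{ℵ₀}` (witnessed by the Katětov extension of `ω` plus a point `∞`). -/
theorem statement15 :
    ∃ (X : Type) (tX : TopologicalSpace X),
      @TopologicalSpace.SeparableSpace X tX ∧ @T2Space X tX ∧
      (2 : Cardinal.{0}) ^ ℵ₀ < tightnessOf (gDelta tX) :=
  ⟨St15.XX, St15.tXX, St15.separable_XX, St15.t2_XX, St15.tight_XX⟩
end
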